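/- arXiv:2003.13207 — 6 statements merged into one kernel-verified Lean document; each statement's English description precedes it below -/
import Mathlib

section
/- The Hardy hierarchy satisfies: for all ordinals α, β < ε₀ and all natural numbers x, if α + β equals the natural (Hessenberg) sum of α and β (i.e. the sum is 'defined' as α ∔ β), then H_{α ∔ β}(x) = H_α(H_β(x)). -/
open ONote in
/-- `α` is a successor ordinal notation (its Cantor normal form ends with `ω^0·m`). -/
def ONote.isSucc : ONote → Prop
  | ONote.zero => False
  | ONote.oadd e _ ONote.zero => e = 0
  | ONote.oadd _ _ (ONote.oadd e n a) => ONote.isSucc (ONote.oadd e n a)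

instance : DecidablePred ONote.isSucc := by
  intro a
  induction a with
  | zero => exact .isFalse (by simp [ONote.isSucc])
  | oadd e n a ihe iha =>
    cases a with
    | zero => exact decidable_of_iff (e = 0) Iff.rfl
    | oadd e' n' a' => exact iha

/-- The standard fundamental sequence assignment `α[x]` on Cantor normal forms:
`0[x] = 0`, `(α+1)[x] = α`, and for `λ` with last term `ω^(β+1)` one has
`λ[x] = (λ - ω^(β+1)) + ω^β·x`, while for last term `ω^γ` (`γ` limit),
`λ[x] = (λ - ω^γ) + ω^(γ[x])`. -/
def ONote.fseq : ONote → ℕ → ONote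
  | ONote.zero, _ => ONote.zero
  | ONote.oadd e m (ONote.oadd e' m' a'), x =>
      ONote.oadd e m (ONote.fseq (ONote.oadd e' m' a') x)
  | ONote.oadd ONote.zero m ONote.zero, _ =>
      if _h : m = 1 then ONote.zero else ONote.oadd ONote.zero (m - 1) ONote.zero
  | ONote.oadd (ONote.oadd e1 m1 a1) m ONote.zero, x =>
      let e := ONote.oadd e1 m1 a1
      let tail : ONote → ONote :=
        fun t => if m = 1 then t else ONote.oadd e (m - 1) t
      if ONote.isSucc e then
        match x with
        | 0 => tail ONote.zero
        | Nat.succ y => tail (ONote.oadd (ONote.fseq e (y+1)) (Nat.succPNat y) ONote.zero)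
      else tail (ONote.oadd (ONote.fseq e x) 1 ONote.zero)

/-- `α <_n β` : transitive closure of `α = β[n]`. -/
def ONote.stepLt (n : ℕ) (a b : ONote) : Prop :=
  Relation.TransGen (fun x y => x = ONote.fseq y n) a b

/-- `α ≤_n β`. -/
def ONote.stepLe (n : ℕ) (a b : ONote) : Prop :=
  ONote.stepLt n a b ∨ a = b

/-- The graph of the Hardy hierarchy: `H_0(x) = x`, `H_{α+1}(x) = H_α(x+1)`,
`H_λ(x) = H_{λ[x]}(x)` for limit `λ`. -/
inductive HardyRel : ONote → ℕ → ℕ → Prop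
  | zero (x : ℕ) : HardyRel ONote.zero x x
  | succ {a : ONote} {x y : ℕ} (h : a.isSucc) (hrec : HardyRel (a.fseq x) (x + 1) y) :
      HardyRel a x y
  | limit {a : ONote} {x y : ℕ} (h0 : a ≠ ONote.zero) (h : ¬ a.isSucc)
      (hrec : HardyRel (a.fseq x) x y) : HardyRel a x y

universe u

/-- Natural (Hessenberg) addition of ordinals, as in the older Mathlib's
`Mathlib.SetTheory.Ordinal.NaturalOps` (removed from the current library). -/
noncomputable def Ordinal.nadd (a b : Ordinal.{u}) : Ordinal.{u} :=
  max (⨆ x : Set.Iio a, Order.succ (Ordinal.nadd x.1 b))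
    (⨆ x : Set.Iio b, Order.succ (Ordinal.nadd a x.1))
termination_by (a, b)
decreasing_by all_goals cases x; decreasing_tactic

infixl:65 " ♯ " => Ordinal.nadd

open scoped Classical in
/-- The Hardy function `H_α : ℕ → ℕ` (for `α` in normal form the defining
recursion terminates, so `hardy` is the unique value of the graph `HardyRel`). -/
noncomputable def hardy (a : ONote) (x : ℕ) : ℕ :=
  if h : ∃ y, HardyRel a x y then h.choose else 0

open ONote Ordinal

@[simp] theorem ONote.zero_eq_oadd_iff {e n a} : (0 : ONote) = ONote.oadd e n a ↔ False :=
  ⟨fun h => ONote.noConfusion h, False.elim⟩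
@[simp] theorem ONote.oadd_eq_zero_iff {e n a} : ONote.oadd e n a = (0 : ONote) ↔ False :=
  ⟨fun h => ONote.noConfusion h, False.elim⟩

theorem ONote.not_isSucc_zero : ¬ ONote.isSucc ONote.zero := by simp [ONote.isSucc]

/-! fseq equation lemmas -/

theorem ONote.fseq_zero (x : ℕ) : ONote.fseq ONote.zero x = 0 := rfl

theorem ONote.fseq_oadd_oadd (e : ONote) (m : ℕ+) (e' m' a' x) :
    ONote.fseq (ONote.oadd e m (ONote.oadd e' m' a')) x
      = ONote.oadd e m (ONote.fseq (ONote.oadd e' m' a') x) := by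
  rw [ONote.fseq]

theorem ONote.fseq_nat (m : ℕ+) (x : ℕ) : ONote.fseq (ONote.oadd 0 m 0) x
    = if m = 1 then ONote.zero else ONote.oadd 0 (m-1) 0 := by
  rw [ONote.fseq.eq_def]; split <;> simp_all

theorem ONote.fseq_lim (e1 m1 a1 m x) (h : ¬ ONote.isSucc (ONote.oadd e1 m1 a1)) :
    ONote.fseq (ONote.oadd (ONote.oadd e1 m1 a1) m 0) x
    = if m = 1 then (ONote.oadd (ONote.fseq (ONote.oadd e1 m1 a1) x) 1 0)
      else ONote.oadd (ONote.oadd e1 m1 a1) (m-1) (ONote.oadd (ONote.fseq (ONote.oadd e1 m1 a1) x) 1 0) := by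
  rw [ONote.fseq.eq_def]; split <;> simp_all

theorem ONote.fseq_succ (e1 m1 a1 m) (h : ONote.isSucc (ONote.oadd e1 m1 a1)) (y : ℕ) :
    ONote.fseq (ONote.oadd (ONote.oadd e1 m1 a1) m 0) (y+1)
    = if m = 1 then ONote.oadd (ONote.fseq (ONote.oadd e1 m1 a1) (y+1)) (Nat.succPNat y) 0
      else ONote.oadd (ONote.oadd e1 m1 a1) (m-1) (ONote.oadd (ONote.fseq (ONote.oadd e1 m1 a1) (y+1)) (Nat.succPNat y) 0) := by
  rw [ONote.fseq.eq_def]; split <;> simp_all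

theorem ONote.fseq_succ0 (e1 m1 a1 m) (h : ONote.isSucc (ONote.oadd e1 m1 a1)) :
    ONote.fseq (ONote.oadd (ONote.oadd e1 m1 a1) m 0) 0
    = if m = 1 then 0 else ONote.oadd (ONote.oadd e1 m1 a1) (m-1) 0 := by
  rw [ONote.fseq.eq_def]; split <;> simp_all

/-! topExp / lastExp / Compat -/

/-- Exponent of the first (largest) term. -/
def ONote.topExp : ONote → ONote
  | ONote.zero => 0
  | ONote.oadd e _ _ => e

/-- Exponent of the last (smallest) term. -/
def ONote.lastExp : ONote → ONote
  | ONote.zero => 0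
  | ONote.oadd e _ ONote.zero => e
  | ONote.oadd _ _ (ONote.oadd e n a) => ONote.lastExp (ONote.oadd e n a)

@[simp] theorem ONote.topExp_zero : ONote.topExp 0 = 0 := rfl
@[simp] theorem ONote.topExp_oadd (e n a) : ONote.topExp (ONote.oadd e n a) = e := rfl
@[simp] theorem ONote.lastExp_zero : ONote.lastExp 0 = 0 := rfl
@[simp] theorem ONote.lastExp_oadd_zero (e n) : ONote.lastExp (ONote.oadd e n 0) = e := rfl
theorem ONote.lastExp_oadd (e n t) (ht : t ≠ 0) :
    ONote.lastExp (ONote.oadd e n t) = ONote.lastExp t := by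
  cases t with
  | zero => exact absurd rfl ht
  | oadd e' n' t' => rfl

/-- The condition under which `a + b` is a "concatenation" of Cantor normal forms. -/
def ONote.Compat (a b : ONote) : Prop :=
  a = 0 ∨ b = 0 ∨ ONote.repr b.topExp ≤ ONote.repr a.lastExp

theorem ONote.lastExp_le : ∀ {e n t}, ONote.NF (ONote.oadd e n t) →
    ONote.repr (ONote.lastExp (ONote.oadd e n t)) ≤ ONote.repr e
  | _, _, ONote.zero, _ => le_rfl
  | e, n, ONote.oadd e' n' t', h => by
    have : ONote.lastExp (ONote.oadd e n (ONote.oadd e' n' t'))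
        = ONote.lastExp (ONote.oadd e' n' t') := rfl
    rw [this]
    exact le_trans (ONote.lastExp_le h.snd) (le_of_lt h.snd'.lt)

theorem ONote.cmp_eq_gt_of {x y : ONote} (h1 : ONote.NF x) (h2 : ONote.NF y)
    (h : ONote.repr y < ONote.repr x) : ONote.cmp x y = Ordering.gt := by
  exact ((@ONote.cmp_compares x y h1 h2).eq_gt).2 h

theorem ONote.cmp_self_eq {x : ONote} (h1 : ONote.NF x) : ONote.cmp x x = Ordering.eq := by
  exact ((@ONote.cmp_compares x x h1 h1).eq_eq).2 rfl

theorem ONote.add_zero' : ∀ {a : ONote}, ONote.NF a → a + 0 = a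
  | ONote.zero, _ => rfl
  | ONote.oadd e n t, h => by
    rw [ONote.oadd_add, ONote.add_zero' h.snd]
    cases t with
    | zero => rfl
    | oadd e' n' t' =>
      have hg : ONote.cmp e e' = Ordering.gt := ONote.cmp_eq_gt_of h.fst h.snd.fst h.snd'.lt
      simp [ONote.addAux, hg]

theorem ONote.addAux_ne_zero (e : ONote) (n : ℕ+) (o : ONote) : ONote.addAux e n o ≠ 0 := by
  unfold ONote.addAux
  cases o with
  | zero => simp
  | oadd e' n' t' => rcases hcmp : ONote.cmp e e' with _ | _ | _ <;> simp [hcmp]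

theorem ONote.add_ne_zero_left : ∀ {a : ONote} (b : ONote), a ≠ 0 → a + b ≠ 0
  | ONote.zero, _, h => absurd rfl h
  | ONote.oadd e n t, b, _ => by
    rw [ONote.oadd_add]; exact ONote.addAux_ne_zero _ _ _

theorem ONote.add_ne_zero_right : ∀ (a : ONote) {b : ONote}, b ≠ 0 → a + b ≠ 0
  | ONote.zero, b, h => h
  | ONote.oadd e n t, b, _ => by
    rw [ONote.oadd_add]; exact ONote.addAux_ne_zero _ _ _

theorem ONote.topExp_add : ∀ {a : ONote}, ONote.NF a → ∀ (b : ONote),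
    ONote.repr (ONote.topExp (a + b)) ≤
      max (ONote.repr (ONote.topExp a)) (ONote.repr (ONote.topExp b))
  | ONote.zero, _, b => by simp
  | ONote.oadd e n t, h, b => by
    have IH := ONote.topExp_add h.snd b
    have hte : ONote.repr (ONote.topExp t) ≤ ONote.repr e := by
      cases t with
      | zero => simp
      | oadd e' n' t' => exact le_of_lt h.snd'.lt
    rw [ONote.oadd_add]
    unfold ONote.addAux
    cases htb : t + b with
    | zero => simp
    | oadd e' n' t' =>
      have he' : ONote.repr e' ≤ max (ONote.repr e) (ONote.repr (ONote.topExp b)) := by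
        have := IH; rw [htb] at this
        exact le_trans this (max_le_max hte le_rfl)
      rcases hcmp : ONote.cmp e e' with _ | _ | _ <;> simp only [hcmp] <;> simp <;>
        exact le_max_iff.1 he'

theorem Ordinal.omega_opow_mul_nat_lt {w E : Ordinal} (h : w < E) (k : ℕ+) :
    ω ^ w * ((k : ℕ) : Ordinal) < ω ^ E := by
  calc ω ^ w * ((k : ℕ) : Ordinal) < ω ^ w * ω :=
        (mul_lt_mul_iff_right₀ (Ordinal.opow_pos _ Ordinal.omega0_pos)).2
          (Ordinal.nat_lt_omega0 k)
    _ = ω ^ (w + 1) := by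
        rw [Ordinal.add_one_eq_succ, Ordinal.opow_succ]
    _ ≤ ω ^ E := Ordinal.opow_le_opow_right Ordinal.omega0_pos
        (by rw [Ordinal.add_one_eq_succ]; exact Order.succ_le_of_lt h)

theorem PNat.coe_sub_one_add_one {m : ℕ+} (hm : m ≠ 1) : ((m - 1 : ℕ+) : ℕ) + 1 = (m : ℕ) := by
  have h1 : (1 : ℕ+) < m := lt_of_le_of_ne m.one_le (Ne.symm hm)
  rw [PNat.sub_coe, if_pos h1]
  have h2 : 1 < (m : ℕ) := by exact_mod_cast h1
  simp only [PNat.one_coe]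
  omega

theorem ONote.repr_oadd' (e : ONote) (n : ℕ+) (a : ONote) :
    ONote.repr (ONote.oadd e n a) = ω ^ ONote.repr e * ((n:ℕ):Ordinal) + ONote.repr a := rfl

theorem ONote.repr_zero' : ONote.repr 0 = 0 := rfl

theorem ONote.fseq_main : ∀ (a : ONote), ONote.NF a → ∀ (x : ℕ),
    ONote.NF (ONote.fseq a x) ∧ (a ≠ 0 → ONote.repr (ONote.fseq a x) < ONote.repr a)
  | ONote.zero, _, _ => ⟨ONote.NF.zero, fun h => absurd rfl h⟩
  | ONote.oadd e m (ONote.oadd e' m' t'), h, x => by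
    obtain ⟨IH1, IH2⟩ := ONote.fseq_main (ONote.oadd e' m' t') h.snd x
    rw [ONote.fseq_oadd_oadd]
    have hlt : ONote.repr (ONote.fseq (ONote.oadd e' m' t') x)
        < ONote.repr (ONote.oadd e' m' t') := IH2 (by simp)
    refine ⟨ONote.NF.oadd h.fst m (ONote.NF.below_of_lt' (lt_trans hlt h.snd'.repr_lt) IH1),
      fun _ => ?_⟩
    simp only [ONote.repr]
    exact add_lt_add_right hlt _
  | ONote.oadd ONote.zero m ONote.zero, _, x => by
    simp only [ONote.zero_def]
    rw [ONote.fseq_nat]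
    split
    · refine ⟨ONote.NF.zero, fun _ => ?_⟩
      have : (0:Ordinal.{0}) < ((m:ℕ):Ordinal.{0}) := by exact_mod_cast m.pos
      simpa using this
    · rename_i hm
      refine ⟨ONote.NF.oadd ONote.NF.zero _ ONote.NFBelow.zero, fun _ => ?_⟩
      have h1 : ((m-1 : ℕ+) : ℕ) < (m:ℕ) := by
        have := PNat.coe_sub_one_add_one hm; omega
      have : (((m-1:ℕ+):ℕ):Ordinal.{0}) < ((m:ℕ):Ordinal.{0}) := by exact_mod_cast h1
      simpa using this
  | ONote.oadd (ONote.oadd e1 m1 a1) m ONote.zero, h, x => by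
    have hNFe : ONote.NF (ONote.oadd e1 m1 a1) := h.fst
    have inner : ∀ (x' : ℕ) (k : ℕ+),
        ONote.NF (ONote.oadd (ONote.fseq (ONote.oadd e1 m1 a1) x') k 0) ∧
        ONote.repr (ONote.oadd (ONote.fseq (ONote.oadd e1 m1 a1) x') k 0)
          < ω ^ ONote.repr (ONote.oadd e1 m1 a1) := by
      intro x' k
      obtain ⟨IW1, IW2⟩ := ONote.fseq_main (ONote.oadd e1 m1 a1) hNFe x'
      have hw := IW2 (by simp)
      refine ⟨ONote.NF.oadd IW1 k ONote.NFBelow.zero, ?_⟩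
      rw [ONote.repr_oadd', ONote.repr_zero', add_zero]
      exact Ordinal.omega_opow_mul_nat_lt hw k
    have tail0 : ∀ t : ONote, ONote.NF t → ONote.repr t < ω ^ ONote.repr (ONote.oadd e1 m1 a1) →
        ONote.NF (if m = 1 then t else ONote.oadd (ONote.oadd e1 m1 a1) (m-1) t) ∧
        ONote.repr (if m = 1 then t else ONote.oadd (ONote.oadd e1 m1 a1) (m-1) t)
          < ONote.repr (ONote.oadd (ONote.oadd e1 m1 a1) m 0) := by
      intro t hNFt hlt
      split
      · refine ⟨hNFt, ?_⟩
        rw [ONote.repr_oadd', ONote.repr_zero', add_zero]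
        refine lt_of_lt_of_le hlt (Ordinal.le_mul_left _ ?_)
        exact_mod_cast m.pos
      · rename_i hm
        refine ⟨ONote.NF.oadd hNFe _ (ONote.NF.below_of_lt' hlt hNFt), ?_⟩
        rw [ONote.repr_oadd' (ONote.oadd e1 m1 a1) (m-1) t,
          ONote.repr_oadd' (ONote.oadd e1 m1 a1) m 0, ONote.repr_zero', add_zero]
        calc ω ^ ONote.repr (ONote.oadd e1 m1 a1) * (((m-1:ℕ+):ℕ):Ordinal) + ONote.repr t
            < ω ^ ONote.repr (ONote.oadd e1 m1 a1) * (((m-1:ℕ+):ℕ):Ordinal)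
                + ω ^ ONote.repr (ONote.oadd e1 m1 a1) := add_lt_add_right hlt _
          _ = ω ^ ONote.repr (ONote.oadd e1 m1 a1) * (((((m-1:ℕ+):ℕ) + 1 : ℕ)):Ordinal) := by
              push_cast; rw [mul_add_one]
          _ = ω ^ ONote.repr (ONote.oadd e1 m1 a1) * ((m:ℕ):Ordinal) := by
              rw [PNat.coe_sub_one_add_one hm]
    by_cases hs : ONote.isSucc (ONote.oadd e1 m1 a1)
    · cases x with
      | zero =>
        simp only [ONote.zero_def]
        rw [ONote.fseq_succ0 _ _ _ _ hs]
        have h0 : ONote.repr (0 : ONote) < ω ^ ONote.repr (ONote.oadd e1 m1 a1) := by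
          simpa using Ordinal.opow_pos (ONote.repr (ONote.oadd e1 m1 a1)) Ordinal.omega0_pos
        exact ⟨(tail0 0 ONote.NF.zero h0).1, fun _ => (tail0 0 ONote.NF.zero h0).2⟩
      | succ y =>
        simp only [ONote.zero_def]
        rw [ONote.fseq_succ _ _ _ _ hs]
        exact ⟨(tail0 _ (inner (y+1) _).1 (inner (y+1) _).2).1,
          fun _ => (tail0 _ (inner (y+1) _).1 (inner (y+1) _).2).2⟩
    · simp only [ONote.zero_def]
      rw [ONote.fseq_lim _ _ _ _ _ hs]
      exact ⟨(tail0 _ (inner x _).1 (inner x _).2).1,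
        fun _ => (tail0 _ (inner x _).1 (inner x _).2).2⟩

theorem ONote.topExp_fseq : ∀ {a : ONote}, ONote.NF a → ∀ (x : ℕ),
    ONote.repr (ONote.topExp (ONote.fseq a x)) ≤ ONote.repr (ONote.topExp a)
  | ONote.zero, _, _ => le_rfl
  | ONote.oadd e m (ONote.oadd e' m' t'), _, x => by
    rw [ONote.fseq_oadd_oadd]; simp
  | ONote.oadd ONote.zero m ONote.zero, _, x => by
    simp only [ONote.zero_def]
    rw [ONote.fseq_nat]; split <;> simp
  | ONote.oadd (ONote.oadd e1 m1 a1) m ONote.zero, h, x => by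
    have hw : ∀ x', ONote.repr (ONote.fseq (ONote.oadd e1 m1 a1) x')
        < ONote.repr (ONote.oadd e1 m1 a1) :=
      fun x' => (ONote.fseq_main _ h.fst x').2 (by simp)
    by_cases hs : ONote.isSucc (ONote.oadd e1 m1 a1)
    · cases x with
      | zero =>
        simp only [ONote.zero_def]
        rw [ONote.fseq_succ0 _ _ _ _ hs]; split <;> simp
      | succ y =>
        simp only [ONote.zero_def]
        rw [ONote.fseq_succ _ _ _ _ hs]; split <;> simp
        exact le_of_lt (hw (y+1))
    · simp only [ONote.zero_def]
      rw [ONote.fseq_lim _ _ _ _ _ hs]; split <;> simp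
      exact le_of_lt (hw x)

theorem hardyRel_det : ∀ {a : ONote} {x y : ℕ}, HardyRel a x y → ∀ {z : ℕ}, HardyRel a x z → y = z := by
  intro a x y h
  induction h with
  | zero x =>
    intro z hz
    cases hz with
    | zero => rfl
    | succ h _ => exact absurd h ONote.not_isSucc_zero
    | limit h0 _ _ => exact absurd rfl h0
  | succ h hrec ih =>
    intro z hz
    cases hz with
    | zero => exact absurd h ONote.not_isSucc_zero
    | succ h' hrec' => exact ih hrec'
    | limit _ h' _ => exact absurd h h'
  | limit h0 h hrec ih =>
    intro z hz
    cases hz with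
    | zero => exact absurd rfl h0
    | succ h' _ => exact absurd h' h
    | limit _ _ hrec' => exact ih hrec'

theorem hardy_eq {a : ONote} {x y : ℕ} (h : HardyRel a x y) : hardy a x = y := by
  rw [hardy, dif_pos ⟨y, h⟩]
  exact hardyRel_det (⟨y, h⟩ : ∃ y, HardyRel a x y).choose_spec h

theorem hardy_total_aux : ∀ (o : Ordinal), ∀ (a : ONote), ONote.repr a = o → ONote.NF a →
    ∀ (x : ℕ), ∃ y, HardyRel a x y := by
  intro o
  induction o using Ordinal.induction with
  | h o IH =>
    intro a hao ha x
    subst hao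
    by_cases h0 : a = 0
    · subst h0; exact ⟨x, HardyRel.zero x⟩
    by_cases hs : ONote.isSucc a
    · obtain ⟨y, hy⟩ := IH (ONote.repr (ONote.fseq a x)) ((ONote.fseq_main a ha x).2 h0)
        (ONote.fseq a x) rfl (ONote.fseq_main a ha x).1 (x+1)
      exact ⟨y, HardyRel.succ hs hy⟩
    · obtain ⟨y, hy⟩ := IH (ONote.repr (ONote.fseq a x)) ((ONote.fseq_main a ha x).2 h0)
        (ONote.fseq a x) rfl (ONote.fseq_main a ha x).1 x
      exact ⟨y, HardyRel.limit h0 hs hy⟩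

theorem hardy_total (a : ONote) (ha : ONote.NF a) (x : ℕ) : ∃ y, HardyRel a x y :=
  hardy_total_aux (ONote.repr a) a rfl ha x

theorem ONote.compat_fseq {a b : ONote} (hb : ONote.NF b) (hC : ONote.Compat a b) (x : ℕ) :
    ONote.Compat a (ONote.fseq b x) := by
  rcases hC with h | h | h
  · exact Or.inl h
  · subst h; exact Or.inr (Or.inl rfl)
  · exact Or.inr (Or.inr (le_trans (ONote.topExp_fseq hb x) h))

theorem PNat.add_ne_one (n N : ℕ+) : n + N ≠ 1 := by
  intro hh
  have h1 := congrArg (fun p : ℕ+ => (p : ℕ)) hh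
  simp only [PNat.add_coe, PNat.one_coe] at h1
  have h2 := n.pos
  have h3 := N.pos
  omega

theorem PNat.add_one_sub_one (n : ℕ+) : n + 1 - 1 = n := by
  apply PNat.coe_injective
  have h1 : (1:ℕ+) < n + 1 := by
    have := n.pos
    rw [← PNat.coe_lt_coe]
    simp only [PNat.add_coe, PNat.one_coe]
    omega
  rw [PNat.sub_coe, if_pos h1]
  simp only [PNat.add_coe, PNat.one_coe]
  omega

theorem PNat.add_sub_one' (n N : ℕ+) (hN : N ≠ 1) : n + (N - 1) = n + N - 1 := by
  have h1 : (1:ℕ+) < N := lt_of_le_of_ne N.one_le (Ne.symm hN)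
  have h1' : 1 < (N:ℕ) := by exact_mod_cast h1
  have h2 : (1:ℕ+) < n + N := by
    rw [← PNat.coe_lt_coe]
    simp only [PNat.add_coe, PNat.one_coe]
    have := n.pos
    omega
  apply PNat.coe_injective
  rw [PNat.add_coe, PNat.sub_coe, PNat.sub_coe, if_pos h1, if_pos h2]
  simp only [PNat.add_coe, PNat.one_coe]
  omega

theorem ONote.oadd_add_of_lt {e : ONote} {n : ℕ+} {t b : ONote}
    (h : ONote.NF (ONote.oadd e n t)) (hb : ONote.NF b) (ht : t ≠ 0)
    (hC : ONote.repr (ONote.topExp b) ≤ ONote.repr (ONote.lastExp t)) :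
    ONote.oadd e n t + b = ONote.oadd e n (t + b) := by
  rw [ONote.oadd_add]
  cases htb : t + b with
  | zero => exact absurd htb (ONote.add_ne_zero_left b ht)
  | oadd E3 N3 s3 =>
    have hnf : ONote.NF (t + b) := @ONote.add_nf t b h.snd hb
    rw [htb] at hnf
    have hE3 : ONote.repr E3 < ONote.repr e := by
      have h1 := ONote.topExp_add h.snd b
      rw [htb] at h1
      have h2 : ONote.repr (ONote.topExp t) < ONote.repr e := by
        cases t with
        | zero => exact absurd rfl ht
        | oadd e' n' t' => exact h.snd'.lt
      have h3 : ONote.repr (ONote.topExp b) < ONote.repr e := by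
        refine lt_of_le_of_lt (le_trans hC ?_) h2
        cases t with
        | zero => exact absurd rfl ht
        | oadd e' n' t' => exact ONote.lastExp_le h.snd
      exact lt_of_le_of_lt h1 (max_lt h2 h3)
    have hg : ONote.cmp e E3 = Ordering.gt := ONote.cmp_eq_gt_of h.fst hnf.fst hE3
    simp [ONote.addAux, hg]

theorem ONote.key_add (e : ONote) (n N : ℕ+) (h : ONote.NF (ONote.oadd e n 0)) (w' : ONote)
    (hw' : w' = 0 ∨ ∃ (w : ONote) (k : ℕ+),
      w' = ONote.oadd w k 0 ∧ ONote.NF w ∧ ONote.repr w < ONote.repr e) :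
    ONote.oadd e n 0 + (if N = 1 then w' else ONote.oadd e (N-1) w')
      = ONote.oadd e ((n+N)-1) w' := by
  split
  · rename_i hN1
    subst hN1
    rcases hw' with rfl | ⟨w, k, rfl, hNFw, hww⟩
    · rw [ONote.add_zero' h, PNat.add_one_sub_one]
    · have hg : ONote.cmp e w = Ordering.gt := ONote.cmp_eq_gt_of h.fst hNFw hww
      rw [ONote.oadd_add, ONote.zero_add, PNat.add_one_sub_one]
      simp [ONote.addAux, hg]
  · rename_i hN1
    rw [ONote.oadd_add, ONote.zero_add, ← PNat.add_sub_one' n N hN1]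
    have hq : ONote.cmp e e = Ordering.eq := ONote.cmp_self_eq h.fst
    simp [ONote.addAux, hq]

theorem ONote.add_fseq : ∀ {a : ONote}, ONote.NF a → ∀ {b : ONote}, ONote.NF b →
    ONote.Compat a b → b ≠ 0 → ∀ (x : ℕ),
    ONote.fseq (a + b) x = a + ONote.fseq b x
  | ONote.zero, _, b, hb, hC, hb0, x => by simp
  | ONote.oadd e n (ONote.oadd e' n' t'), h, b, hb, hC, hb0, x => by
    have hCt : ONote.repr (ONote.topExp b) ≤ ONote.repr (ONote.lastExp (ONote.oadd e' n' t')) := by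
      rcases hC with h' | h' | h'
      · exact absurd h' (by simp)
      · exact absurd h' hb0
      · rwa [ONote.lastExp_oadd _ _ _ (by simp)] at h'
    have IH := ONote.add_fseq h.snd hb (Or.inr (Or.inr hCt)) hb0 x
    rw [ONote.oadd_add_of_lt h hb (by simp) hCt]
    cases htb : ONote.oadd e' n' t' + b with
    | zero => exact absurd htb (ONote.add_ne_zero_left b (by simp))
    | oadd E3 N3 s3 =>
      rw [ONote.fseq_oadd_oadd, ← htb, IH]
      have hCf : ONote.repr (ONote.topExp (ONote.fseq b x))
          ≤ ONote.repr (ONote.lastExp (ONote.oadd e' n' t')) :=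
        le_trans (ONote.topExp_fseq hb x) hCt
      rw [ONote.oadd_add_of_lt h (ONote.fseq_main b hb x).1 (by simp) hCf]
  | ONote.oadd e n ONote.zero, h, b, hb, hC, hb0, x => by
    cases b with
    | zero => exact absurd rfl hb0
    | oadd E N s =>
      have hCE : ONote.repr E ≤ ONote.repr e := by
        rcases hC with h' | h' | h'
        · exact absurd h' (by simp)
        · exact absurd h' hb0
        · simpa using h'
      rcases hcmp : ONote.cmp e E with _ | _ | _
      · have hcc := @ONote.cmp_compares e E h.fst hb.fst
        rw [hcmp] at hcc
        exact absurd (lt_of_le_of_lt hCE hcc) (lt_irrefl _)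
      · have heE : e = E := by
          have hcc := @ONote.cmp_compares e E h.fst hb.fst
          rwa [hcmp] at hcc
        subst heE
        have hadd : ONote.oadd e n 0 + ONote.oadd e N s = ONote.oadd e (n+N) s := by
          rw [ONote.oadd_add, ONote.zero_add]
          simp [ONote.addAux, hcmp]
        simp only [ONote.zero_def]
        rw [hadd]
        cases s with
        | oadd E' N' s' =>
          rw [ONote.fseq_oadd_oadd, ONote.fseq_oadd_oadd, ONote.oadd_add, ONote.zero_add]
          simp [ONote.addAux, hcmp]
        | zero =>
          have key := ONote.key_add e n N h
          cases e with
          | zero =>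
            simp only [ONote.zero_def]
            rw [ONote.fseq_nat (n+N) x, ONote.fseq_nat N x, if_neg (PNat.add_ne_one n N)]
            exact (key _ (Or.inl rfl)).symm
          | oadd e1 m1 a1 =>
            have hNFe : ONote.NF (ONote.oadd e1 m1 a1) := h.fst
            have hwlt : ∀ x', ONote.repr (ONote.fseq (ONote.oadd e1 m1 a1) x')
                < ONote.repr (ONote.oadd e1 m1 a1) :=
              fun x' => (ONote.fseq_main _ hNFe x').2 (by simp)
            have hwNF : ∀ x', ONote.NF (ONote.fseq (ONote.oadd e1 m1 a1) x') :=
              fun x' => (ONote.fseq_main _ hNFe x').1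
            by_cases hs : ONote.isSucc (ONote.oadd e1 m1 a1)
            · cases x with
              | zero =>
                simp only [ONote.zero_def]
                rw [ONote.fseq_succ0 e1 m1 a1 (n+N) hs, ONote.fseq_succ0 e1 m1 a1 N hs,
                  if_neg (PNat.add_ne_one n N)]
                exact (key _ (Or.inl rfl)).symm
              | succ y =>
                simp only [ONote.zero_def]
                rw [ONote.fseq_succ e1 m1 a1 (n+N) hs y, ONote.fseq_succ e1 m1 a1 N hs y,
                  if_neg (PNat.add_ne_one n N)]
                exact (key _ (Or.inr ⟨_, _, rfl, hwNF (y+1), hwlt (y+1)⟩)).symm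
            · simp only [ONote.zero_def]
              rw [ONote.fseq_lim e1 m1 a1 (n+N) x hs, ONote.fseq_lim e1 m1 a1 N x hs,
                if_neg (PNat.add_ne_one n N)]
              exact (key _ (Or.inr ⟨_, _, rfl, hwNF x, hwlt x⟩)).symm
      · have hadd : ONote.oadd e n 0 + ONote.oadd E N s = ONote.oadd e n (ONote.oadd E N s) := by
          rw [ONote.oadd_add, ONote.zero_add]
          simp [ONote.addAux, hcmp]
        simp only [ONote.zero_def]
        rw [hadd, ONote.fseq_oadd_oadd]
        cases hfb : ONote.fseq (ONote.oadd E N s) x with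
        | zero =>
          simp only [ONote.zero_def]
          exact (ONote.add_zero' h).symm
        | oadd E4 N4 s4 =>
          have hE4 : ONote.repr E4 < ONote.repr e := by
            have h1 := ONote.topExp_fseq hb x
            rw [hfb] at h1
            have hcc := @ONote.cmp_compares e E h.fst hb.fst
            rw [hcmp] at hcc
            exact lt_of_le_of_lt (by simpa using h1) hcc
          have hnf4 : ONote.NF (ONote.fseq (ONote.oadd E N s) x) := (ONote.fseq_main _ hb x).1
          rw [hfb] at hnf4
          have hg : ONote.cmp e E4 = Ordering.gt := ONote.cmp_eq_gt_of h.fst hnf4.fst hE4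
          rw [ONote.oadd_add, ONote.zero_add]
          simp [ONote.addAux, hg]

theorem ONote.isSucc_add : ∀ {a : ONote}, ONote.NF a → ∀ {b : ONote}, ONote.NF b →
    ONote.Compat a b → b ≠ 0 → (ONote.isSucc (a + b) ↔ ONote.isSucc b)
  | ONote.zero, _, b, hb, hC, hb0 => Iff.rfl
  | ONote.oadd e n (ONote.oadd e' n' t'), h, b, hb, hC, hb0 => by
    have hCt : ONote.repr (ONote.topExp b) ≤ ONote.repr (ONote.lastExp (ONote.oadd e' n' t')) := by
      rcases hC with h' | h' | h'
      · exact absurd h' (by simp)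
      · exact absurd h' hb0
      · rwa [ONote.lastExp_oadd _ _ _ (by simp)] at h'
    rw [ONote.oadd_add_of_lt h hb (by simp) hCt]
    cases htb : ONote.oadd e' n' t' + b with
    | zero => exact absurd htb (ONote.add_ne_zero_left b (by simp))
    | oadd E3 N3 s3 =>
      have h1 : ONote.isSucc (ONote.oadd e n (ONote.oadd E3 N3 s3))
          = ONote.isSucc (ONote.oadd E3 N3 s3) := rfl
      rw [h1, ← htb]
      exact ONote.isSucc_add h.snd hb (Or.inr (Or.inr hCt)) hb0
  | ONote.oadd e n ONote.zero, h, b, hb, hC, hb0 => by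
    cases b with
    | zero => exact absurd rfl hb0
    | oadd E N s =>
      have hCE : ONote.repr E ≤ ONote.repr e := by
        rcases hC with h' | h' | h'
        · exact absurd h' (by simp)
        · exact absurd h' hb0
        · simpa using h'
      rcases hcmp : ONote.cmp e E with _ | _ | _
      · have hcc := @ONote.cmp_compares e E h.fst hb.fst
        rw [hcmp] at hcc
        exact absurd (lt_of_le_of_lt hCE hcc) (lt_irrefl _)
      · have heE : e = E := by
          have hcc := @ONote.cmp_compares e E h.fst hb.fst
          rwa [hcmp] at hcc
        subst heE
        have hadd : ONote.oadd e n 0 + ONote.oadd e N s = ONote.oadd e (n+N) s := by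
          rw [ONote.oadd_add, ONote.zero_add]
          simp [ONote.addAux, hcmp]
        simp only [ONote.zero_def]
        rw [hadd]
        cases s with
        | zero => exact Iff.rfl
        | oadd E' N' s' => exact Iff.rfl
      · have hadd : ONote.oadd e n 0 + ONote.oadd E N s = ONote.oadd e n (ONote.oadd E N s) := by
          rw [ONote.oadd_add, ONote.zero_add]
          simp [ONote.addAux, hcmp]
        simp only [ONote.zero_def]
        rw [hadd]
        exact Iff.rfl

theorem ONote.isSucc_ne_zero {b : ONote} (h : ONote.isSucc b) : b ≠ 0 := by
  intro hh
  subst hh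
  exact ONote.not_isSucc_zero h

theorem ONote.drop_last : ∀ (a : ONote), a ≠ 0 →
    ∃ (c : Ordinal.{0}) (k : ℕ+),
      ONote.repr a = c + ω ^ ONote.repr (ONote.lastExp a) * ((k:ℕ):Ordinal) ∧ c < ONote.repr a
  | ONote.zero, h => absurd rfl h
  | ONote.oadd e n ONote.zero, _ => by
    simp only [ONote.zero_def]
    refine ⟨0, n, ?_, ?_⟩
    · rw [ONote.repr_oadd', ONote.lastExp_oadd_zero, _root_.zero_add, ONote.repr_zero', add_zero]
    · rw [ONote.repr_oadd', ONote.repr_zero', add_zero]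
      exact mul_pos (Ordinal.opow_pos _ Ordinal.omega0_pos) (by exact_mod_cast n.pos)
  | ONote.oadd e n (ONote.oadd e' n' t'), _ => by
    obtain ⟨c, k, h1, h2⟩ := ONote.drop_last (ONote.oadd e' n' t') (by simp)
    refine ⟨ω ^ ONote.repr e * ((n:ℕ):Ordinal) + c, k, ?_, ?_⟩
    · rw [ONote.lastExp_oadd _ _ _ (by simp), ONote.repr_oadd', h1, add_assoc]
    · rw [ONote.repr_oadd']
      exact add_lt_add_right h2 _

theorem Ordinal.nadd_lt_nadd_right {a b : Ordinal} (h : a < b) (c : Ordinal) : a ♯ c < b ♯ c := by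
  rw [Ordinal.nadd.eq_1 b c]
  refine lt_of_lt_of_le (Order.lt_succ (a ♯ c)) (le_max_of_le_left ?_)
  exact le_ciSup (f := fun y : Set.Iio b => Order.succ (y.1 ♯ c)) Ordinal.bddAbove_of_small ⟨a, h⟩

theorem Ordinal.nadd_lt_nadd_left {a b : Ordinal} (h : a < b) (c : Ordinal) : c ♯ a < c ♯ b := by
  rw [Ordinal.nadd.eq_1 c b]
  refine lt_of_lt_of_le (Order.lt_succ (c ♯ a)) (le_max_of_le_right ?_)
  exact le_ciSup (f := fun y : Set.Iio b => Order.succ (c ♯ y.1)) Ordinal.bddAbove_of_small ⟨a, h⟩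

theorem Ordinal.le_nadd_self (a b : Ordinal) : a ≤ a ♯ b := by
  induction a using Ordinal.induction with
  | h a IH =>
    refine le_of_forall_lt (fun x hx => ?_)
    exact lt_of_le_of_lt (IH x hx) (Ordinal.nadd_lt_nadd_right hx b)

theorem Ordinal.add_le_nadd (a b : Ordinal) : a + b ≤ a ♯ b := by
  induction b using Ordinal.induction with
  | h b IH =>
    refine le_of_forall_lt (fun d hd => ?_)
    rcases lt_or_ge d a with h | h
    · exact lt_of_lt_of_le (lt_of_lt_of_le h (le_refl a)) (Ordinal.le_nadd_self a b)
    · rw [← Ordinal.add_sub_cancel_of_le h] at hd ⊢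
      have hc : d - a < b := (add_lt_add_iff_left a).1 hd
      exact lt_of_le_of_lt (IH _ hc) (Ordinal.nadd_lt_nadd_left hc a)

theorem ONote.compat_of_hdot {a b : ONote} (ha : ONote.NF a) (hb : ONote.NF b)
    (hdot : ONote.repr (a + b) = ONote.repr a ♯ ONote.repr b) : ONote.Compat a b := by
  have hsum : ONote.repr a + ONote.repr b = ONote.repr a ♯ ONote.repr b := by
    rw [← @ONote.repr_add a b ha hb]
    exact hdot
  by_contra hcon
  rw [ONote.Compat, not_or, not_or, not_le] at hcon
  obtain ⟨ha0, hb0, hlt⟩ := hcon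
  obtain ⟨c, k, hdec, hclt⟩ := ONote.drop_last a ha0
  cases b with
  | zero => exact hb0 rfl
  | oadd E N s =>
    have habs : ω ^ ONote.repr (ONote.lastExp a) * ((k:ℕ):Ordinal)
        + ONote.repr (ONote.oadd E N s) = ONote.repr (ONote.oadd E N s) := by
      apply Ordinal.add_absorp (Ordinal.omega_opow_mul_nat_lt (by simpa using hlt) k)
      rw [ONote.repr_oadd']
      exact le_trans (Ordinal.le_mul_left _ (by exact_mod_cast N.pos)) le_self_add
    have h2 : ONote.repr a + ONote.repr (ONote.oadd E N s)
        = c + ONote.repr (ONote.oadd E N s) := by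
      rw [hdec, add_assoc, habs]
    have h3 : ONote.repr a + ONote.repr (ONote.oadd E N s)
        < ONote.repr a ♯ ONote.repr (ONote.oadd E N s) := by
      rw [h2]
      exact lt_of_le_of_lt (Ordinal.add_le_nadd _ _) (Ordinal.nadd_lt_nadd_right hclt _)
    exact absurd hsum (ne_of_lt h3)

theorem hardyRel_add (a : ONote) (ha : ONote.NF a) :
    ∀ {b : ONote} {x z : ℕ}, HardyRel b x z → ONote.NF b → ONote.Compat a b →
    ∀ {y : ℕ}, HardyRel a z y → HardyRel (a + b) x y := by
  intro b x z h1
  induction h1 with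
  | zero x =>
    intro hb hC y h2
    simp only [ONote.zero_def]
    rwa [ONote.add_zero' ha]
  | succ hs hrec ih =>
    intro hb hC y h2
    have hb0 := ONote.isSucc_ne_zero hs
    apply HardyRel.succ ((ONote.isSucc_add ha hb hC hb0).2 hs)
    rw [ONote.add_fseq ha hb hC hb0]
    exact ih (ONote.fseq_main _ hb _).1 (ONote.compat_fseq hb hC _) h2
  | limit h0 hs hrec ih =>
    intro hb hC y h2
    apply HardyRel.limit (ONote.add_ne_zero_right a h0)
      (fun hc => hs ((ONote.isSucc_add ha hb hC h0).1 hc))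
    rw [ONote.add_fseq ha hb hC h0]
    exact ih (ONote.fseq_main _ hb _).1 (ONote.compat_fseq hb hC _) h2
/-- if `α + β` equals the natural (Hessenberg) sum `α ♯ β`
(so that `α ∔ β` is defined), then `H_{α ∔ β}(x) = H_α(H_β(x))`. -/
theorem hardy_add (a b : ONote) (ha : a.NF) (hb : b.NF)
    (hdot : ONote.repr (a + b) = ONote.repr a ♯ ONote.repr b) (x : ℕ) :
    hardy (a + b) x = hardy a (hardy b x) := by
  have hC := ONote.compat_of_hdot ha hb hdot
  obtain ⟨z, hz⟩ := hardy_total b hb x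
  obtain ⟨y, hy⟩ := hardy_total a ha z
  rw [hardy_eq hz, hardy_eq hy, hardy_eq (hardyRel_add a ha hz hb hC hy)]
end

section
/- For every ordinal α < ε₀, the Hardy function H_α : ℕ → ℕ is weakly monotone increasing: for all natural numbers x ≤ y, H_α(x) ≤ H_α(y). -/
namespace ONote
open Ordinal

theorem fseq_zero' (x : ℕ) : fseq 0 x = 0 := by simp [fseq]

theorem fseq_oadd_oadd_s2 (e : ONote) (m : ℕ+) (e' : ONote) (m' : ℕ+) (a' : ONote) (x : ℕ) :
    fseq (oadd e m (oadd e' m' a')) x = oadd e m (fseq (oadd e' m' a') x) := by simp [fseq]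

theorem fseq_nat_s2 (m : ℕ+) (x : ℕ) :
    fseq (oadd 0 m 0) x = if m = 1 then 0 else oadd 0 (m-1) 0 := by simp [fseq]

theorem fseq_succE_zero {e : ONote} (m : ℕ+) (he0 : e ≠ 0) (he : isSucc e) :
    fseq (oadd e m 0) 0 = if m = 1 then 0 else oadd e (m-1) 0 := by
  cases e with
  | zero => exact absurd rfl he0
  | oadd e1 m1 a1 => simp [fseq, he]

theorem fseq_succE {e : ONote} (m : ℕ+) (he0 : e ≠ 0) (he : isSucc e) (y : ℕ) :
    fseq (oadd e m 0) (y+1) = if m = 1 then oadd (fseq e (y+1)) (Nat.succPNat y) 0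
      else oadd e (m-1) (oadd (fseq e (y+1)) (Nat.succPNat y) 0) := by
  cases e with
  | zero => exact absurd rfl he0
  | oadd e1 m1 a1 => simp [fseq, he]

theorem fseq_limitE {e : ONote} (m : ℕ+) (he0 : e ≠ 0) (he : ¬ isSucc e) (x : ℕ) :
    fseq (oadd e m 0) x = if m = 1 then oadd (fseq e x) 1 0
      else oadd e (m-1) (oadd (fseq e x) 1 0) := by
  cases e with
  | zero => exact absurd rfl he0
  | oadd e1 m1 a1 => simp [fseq, he]

theorem not_isSucc_zero_s2 : ¬ isSucc 0 := by simp [isSucc]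

theorem ne_zero_of_isSucc {a : ONote} (h : isSucc a) : a ≠ 0 := by
  rintro rfl; exact not_isSucc_zero_s2 h

theorem oadd_ne_zero' {e : ONote} {n : ℕ+} {a : ONote} : oadd e n a ≠ 0 :=
  fun h => ONote.noConfusion h

theorem repr_zero1 : repr 0 = 0 := rfl
theorem repr_zero2 : repr zero = 0 := rfl
theorem repr_oadd'_s2 (e : ONote) (n : ℕ+) (a : ONote) :
    repr (oadd e n a) = ω ^ repr e * n + repr a := rfl

theorem nf_oadd_zero {e : ONote} (h : NF e) (n : ℕ+) : NF (oadd e n 0) :=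
  h.oadd n NFBelow.zero

theorem isSucc_fseq_indep : ∀ {a : ONote}, isSucc a → ∀ x y : ℕ, fseq a x = fseq a y := by
  intro a
  induction a with
  | zero => intro _ x y; rfl
  | oadd e m t ihe iht =>
    clear ihe
    cases t with
    | zero =>
      intro h x y
      have he : e = 0 := h
      subst he
      rw [zero_def, fseq_nat_s2, fseq_nat_s2]
    | oadd e' m' a' =>
      intro h x y
      have h' : isSucc (oadd e' m' a') := h
      rw [fseq_oadd_oadd_s2, fseq_oadd_oadd_s2, iht h' x y]

private theorem pnat_sub_one_coe {m : ℕ+} (h : m ≠ 1) : ((m - 1 : ℕ+) : ℕ) = (m : ℕ) - 1 := by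
  have h1 : 1 < m := lt_of_le_of_ne m.one_le (Ne.symm h)
  rw [PNat.sub_coe, if_pos h1]; rfl

private theorem pnat_sub_one_lt {m : ℕ+} (h : m ≠ 1) : ((m - 1 : ℕ+) : ℕ) < (m : ℕ) := by
  rw [pnat_sub_one_coe h]; exact Nat.sub_lt m.pos one_pos

private theorem opow_mul_nat_lt {b c : Ordinal} (h : b < c) (k : ℕ+) :
    (ω : Ordinal) ^ b * (k : ℕ) < ω ^ c := by
  have h1 : (ω : Ordinal) ^ b * (k : ℕ) < ω ^ b * ω :=
    (mul_lt_mul_iff_right₀ (opow_pos _ omega0_pos)).2 (nat_lt_omega0 k)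
  calc (ω : Ordinal) ^ b * (k : ℕ) < ω ^ b * ω := h1
    _ = ω ^ (b + 1) := by rw [opow_add, opow_one]
    _ ≤ ω ^ c := opow_le_opow_right omega0_pos (Order.add_one_le_of_lt h)

theorem fseq_nf_lt : ∀ (a : ONote), NF a → ∀ x : ℕ,
    NF (fseq a x) ∧ (a ≠ 0 → repr (fseq a x) < repr a) := by
  intro a
  induction a with
  | zero => intro _ x; exact ⟨NF.zero, fun h => absurd rfl h⟩
  | oadd e m t ihe iht =>
    intro hNF x
    cases t with
    | zero =>
      rw [zero_def]
      cases e with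
      | zero =>
        rw [zero_def, fseq_nat_s2]
        split
        · refine ⟨NF.zero, fun _ => ?_⟩
          rw [repr_zero1, repr_oadd'_s2, repr_zero1, add_zero, opow_zero, one_mul]
          exact_mod_cast m.pos
        · refine ⟨nf_oadd_zero NF.zero _, fun _ => ?_⟩
          rw [repr_oadd'_s2, repr_oadd'_s2, repr_zero1, add_zero, add_zero, opow_zero, one_mul, one_mul]
          exact_mod_cast pnat_sub_one_lt (by assumption)
      | oadd e1 m1 a1 =>
        set e : ONote := oadd e1 m1 a1 with hedef
        have he0 : e ≠ 0 := oadd_ne_zero'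
        have hNFe : NF e := hNF.fst
        have hmono : (ω : Ordinal) ^ repr e * 1 ≤ ω ^ repr e * (m : ℕ) := by
          refine mul_le_mul_right ?_ _
          exact_mod_cast m.one_le
        have key : ∀ X : ONote, NF X → repr X < ω ^ repr e →
            NF (if m = 1 then X else oadd e (m-1) X) ∧
            repr (if m = 1 then X else oadd e (m-1) X) < repr (oadd e m 0) := by
          intro X hX hXlt
          rw [repr_oadd'_s2, repr_zero1, add_zero]
          split
          · refine ⟨hX, ?_⟩
            calc repr X < ω ^ repr e := hXlt
              _ = ω ^ repr e * 1 := (mul_one _).symm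
              _ ≤ ω ^ repr e * (m : ℕ) := hmono
          · rename_i hm
            refine ⟨NF.oadd hNFe _ (NF.below_of_lt' hXlt hX), ?_⟩
            rw [repr_oadd'_s2]
            calc (ω ^ repr e * ((m-1 : ℕ+) : ℕ) + repr X : Ordinal)
                < ω ^ repr e * ((m-1 : ℕ+) : ℕ) + ω ^ repr e := add_lt_add_right hXlt _
              _ = ω ^ repr e * (((m-1 : ℕ+) : ℕ) + 1) := by rw [mul_add, mul_one]
              _ = ω ^ repr e * (m : ℕ) := by
                  congr 1
                  rw [pnat_sub_one_coe hm]
                  exact_mod_cast Nat.succ_pred_eq_of_pos m.pos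
        have hinner : ∀ j : ℕ, ∀ k : ℕ+, NF (oadd (fseq e j) k 0) ∧
            repr (oadd (fseq e j) k 0) < ω ^ repr e := by
          intro j k
          obtain ⟨h1, h2⟩ := ihe hNFe j
          refine ⟨nf_oadd_zero h1 _, ?_⟩
          rw [repr_oadd'_s2, repr_zero1, add_zero]
          exact opow_mul_nat_lt (h2 he0) k
        by_cases hs : isSucc e
        · cases x with
          | zero =>
            rw [fseq_succE_zero m he0 hs]
            have h0 : repr (0 : ONote) < ω ^ repr e := by
              rw [repr_zero1]; exact opow_pos _ omega0_pos
            exact ⟨(key 0 NF.zero h0).1, fun _ => (key 0 NF.zero h0).2⟩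
          | succ y =>
            rw [fseq_succE m he0 hs]
            obtain ⟨h1, h2⟩ := hinner (y+1) (Nat.succPNat y)
            exact ⟨(key _ (by exact h1) h2).1, fun _ => (key _ (by exact h1) h2).2⟩
        · rw [fseq_limitE m he0 hs]
          obtain ⟨h1, h2⟩ := hinner x 1
          exact ⟨(key _ h1 h2).1, fun _ => (key _ h1 h2).2⟩
    | oadd e' m' a' =>
      set t : ONote := oadd e' m' a' with htdef
      have hNFt : NF t := hNF.snd
      obtain ⟨h1, h2⟩ := iht hNFt x
      have h2' := h2 oadd_ne_zero'
      rw [fseq_oadd_oadd_s2]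
      constructor
      · exact NF.oadd hNF.fst _ (NF.below_of_lt' (h2'.trans hNF.snd'.repr_lt) h1)
      · intro _
        rw [repr_oadd'_s2, repr_oadd'_s2]
        exact add_lt_add_right h2' _

theorem fseq_NF {a : ONote} (h : NF a) (x : ℕ) : NF (fseq a x) := (fseq_nf_lt a h x).1

theorem repr_fseq_lt {a : ONote} (h : NF a) (h0 : a ≠ 0) (x : ℕ) :
    repr (fseq a x) < repr a := (fseq_nf_lt a h x).2 h0

end ONote

namespace ONote
open Ordinal

theorem stepLe.trans {n : ℕ} {a b c : ONote} (h1 : stepLe n a b) (h2 : stepLe n b c) :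
    stepLe n a c := by
  rcases h1 with h1 | rfl
  · rcases h2 with h2 | rfl
    · exact Or.inl (h1.trans h2)
    · exact Or.inl h1
  · exact h2

theorem stepLe_of_stepLt {n : ℕ} {a b : ONote} (h : stepLt n a b) : stepLe n a b := Or.inl h

theorem stepLt_zero {n : ℕ} {b : ONote} (h : stepLt n b 0) : b = 0 := by
  suffices H : ∀ t, stepLt n b t → t = 0 → b = 0 from H 0 h rfl
  intro t h
  induction h with
  | single h => rintro rfl; rw [h, fseq_zero']
  | tail _ h ih => rintro rfl; rw [fseq_zero'] at h; exact ih h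

-- every nonzero NF ordinal notation descends to zero
theorem descend_zero (n : ℕ) : ∀ (c : ONote), NF c → c ≠ 0 → stepLt n 0 c := by
  suffices H : ∀ (o : Ordinal) (c : ONote), repr c = o → NF c → c ≠ 0 → stepLt n 0 c by
    intro c; exact H (repr c) c rfl
  intro o
  induction o using Ordinal.induction with
  | h o IH =>
    rintro c rfl hNF h0
    by_cases hz : fseq c n = 0
    · exact Relation.TransGen.single hz.symm
    · exact (IH _ (repr_fseq_lt hNF h0 n) _ rfl (fseq_NF hNF n) hz).tail rfl

theorem stepLt_lift {n : ℕ} (e : ONote) (m : ℕ+) :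
    ∀ {s t : ONote}, stepLt n s t → NF t → t ≠ 0 →
      stepLt n (oadd e m s) (oadd e m t) := by
  intro s t h
  induction h with
  | single h =>
    intro hNF h0
    rename_i t'
    obtain ⟨e', m', a', rfl⟩ : ∃ e' m' a', t' = oadd e' m' a' := by
      cases t' with
      | zero => exact absurd rfl h0
      | oadd e' m' a' => exact ⟨e', m', a', rfl⟩
    exact Relation.TransGen.single (by rw [fseq_oadd_oadd_s2, ← h])
  | tail h1 h2 ih =>
    rename_i c t'
    intro hNF h0
    obtain ⟨e', m', a', rfl⟩ : ∃ e' m' a', t' = oadd e' m' a' := by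
      cases t' with
      | zero => exact absurd rfl h0
      | oadd e' m' a' => exact ⟨e', m', a', rfl⟩
    by_cases hc : c = 0
    · subst hc
      have hs : _ = (0 : ONote) := stepLt_zero h1
      subst hs
      exact Relation.TransGen.single (by rw [fseq_oadd_oadd_s2, ← h2])
    · exact (ih (h2 ▸ fseq_NF hNF n) hc).tail (by rw [fseq_oadd_oadd_s2, ← h2])

theorem stepLe_lift {n : ℕ} (e : ONote) (m : ℕ+) {s t : ONote} (h : stepLe n s t)
    (hNF : NF t) : stepLe n (oadd e m s) (oadd e m t) := by
  rcases h with h | rfl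
  · by_cases h0 : t = 0
    · subst h0; rw [stepLt_zero h]; exact Or.inr rfl
    · exact Or.inl (stepLt_lift e m h hNF h0)
  · exact Or.inr rfl

private theorem pnat_one_lt_add_one (k : ℕ+) : (1 : ℕ+) < k + 1 := by
  rw [← PNat.coe_lt_coe, PNat.add_coe, PNat.one_coe]
  have := k.pos; omega

private theorem pnat_add_one_sub_one (k : ℕ+) : (k + 1) - 1 = k := by
  apply PNat.coe_injective
  rw [PNat.sub_coe, if_pos (pnat_one_lt_add_one k)]
  simp

private theorem pnat_add_one_ne_one (k : ℕ+) : (k + 1 : ℕ+) ≠ 1 := by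
  intro h
  exact absurd (h ▸ pnat_one_lt_add_one k) (lt_irrefl _)

-- one coefficient-decrement step:  ω^p·k  <_n  ω^p·(k+1)  (for n ≥ 1)
theorem coeff_step {p : ONote} (hp : NF p) {n : ℕ} (hn : 1 ≤ n) (k : ℕ+) :
    stepLt n (oadd p k 0) (oadd p (k+1) 0) := by
  cases p with
  | zero =>
    apply Relation.TransGen.single
    rw [zero_def, fseq_nat_s2, if_neg (pnat_add_one_ne_one k), pnat_add_one_sub_one]
  | oadd p1 n1 a1 =>
    set p : ONote := oadd p1 n1 a1 with hpdef
    have hp0 : p ≠ 0 := oadd_ne_zero'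
    obtain ⟨y, rfl⟩ : ∃ y, n = y + 1 := ⟨n - 1, by omega⟩
    obtain ⟨W, hW, hWnf, hW0⟩ : ∃ W, fseq (oadd p (k+1) 0) (y+1) = oadd p k W ∧
        NF W ∧ W ≠ 0 := by
      by_cases hs : isSucc p
      · refine ⟨oadd (fseq p (y+1)) (Nat.succPNat y) 0, ?_, ?_, oadd_ne_zero'⟩
        · rw [fseq_succE _ hp0 hs, if_neg (pnat_add_one_ne_one k), pnat_add_one_sub_one]
        · exact nf_oadd_zero (fseq_NF hp _) _
      · refine ⟨oadd (fseq p (y+1)) 1 0, ?_, ?_, oadd_ne_zero'⟩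
        · rw [fseq_limitE _ hp0 hs, if_neg (pnat_add_one_ne_one k), pnat_add_one_sub_one]
        · exact nf_oadd_zero (fseq_NF hp _) _
    have h1 : stepLt (y+1) 0 W := descend_zero _ W hWnf hW0
    have h2 : stepLt (y+1) (oadd p k 0) (oadd p k W) := stepLt_lift p k h1 hWnf hW0
    exact h2.tail hW.symm

theorem coeff_descend {p : ONote} (hp : NF p) {n : ℕ} (hn : 1 ≤ n) :
    ∀ (k j : ℕ+), j ≤ k → stepLe n (oadd p j 0) (oadd p k 0) := by
  have main : ∀ (d : ℕ) (k j : ℕ+), (k : ℕ) = (j : ℕ) + d →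
      stepLe n (oadd p j 0) (oadd p k 0) := by
    intro d
    induction d with
    | zero =>
      intro k j hk
      have : j = k := PNat.coe_injective (by omega)
      exact Or.inr (by rw [this])
    | succ d ih =>
      intro k j hk
      have hjd : 0 < (j : ℕ) + d := by have := j.pos; omega
      set k' : ℕ+ := ⟨(j : ℕ) + d, hjd⟩ with hk'def
      have hkk : k = k' + 1 := by
        apply PNat.coe_injective
        rw [PNat.add_coe, PNat.one_coe]
        change _ = (j:ℕ) + d + 1
        omega
      have step1 : stepLe n (oadd p j 0) (oadd p k' 0) := ih k' j rfl
      have step2 : stepLt n (oadd p k' 0) (oadd p k 0) := by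
        rw [hkk]; exact coeff_step hp hn k'
      exact step1.trans (stepLe_of_stepLt step2)
  intro k j hj
  have hj' : (j : ℕ) ≤ (k : ℕ) := hj
  exact main ((k : ℕ) - (j : ℕ)) k j (by omega)

end ONote

namespace ONote
open Ordinal

-- ω^(u[n]) ≤_n ω^u  (for n ≥ 1)
theorem omega_pow_step {u : ONote} (hu : NF u) {n : ℕ} (hn : 1 ≤ n) :
    stepLe n (oadd (fseq u n) 1 0) (oadd u 1 0) := by
  cases u with
  | zero => exact Or.inr (by rw [zero_def, fseq_zero'])
  | oadd u1 n1 a1 =>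
    set u : ONote := oadd u1 n1 a1 with hudef
    have hu0 : u ≠ 0 := oadd_ne_zero'
    obtain ⟨y, rfl⟩ : ∃ y, n = y + 1 := ⟨n - 1, by omega⟩
    by_cases hs : isSucc u
    · have hc : fseq (oadd u 1 0) (y+1) = oadd (fseq u (y+1)) (Nat.succPNat y) 0 := by
        rw [fseq_succE _ hu0 hs, if_pos rfl]
      have h1 : stepLe (y+1) (oadd (fseq u (y+1)) 1 0) (oadd (fseq u (y+1)) (Nat.succPNat y) 0) :=
        coeff_descend (fseq_NF hu _) hn _ _ (Nat.succPNat y).one_le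
      rcases h1 with h1 | h1
      · exact Or.inl (h1.tail hc.symm)
      · exact Or.inl (Relation.TransGen.single (by rw [hc, ← h1]))
    · have hc : fseq (oadd u 1 0) (y+1) = oadd (fseq u (y+1)) 1 0 := by
        rw [fseq_limitE _ hu0 hs, if_pos rfl]
      exact Or.inl (Relation.TransGen.single hc.symm)

theorem omega_pow_lift {n : ℕ} (hn : 1 ≤ n) :
    ∀ {b c : ONote}, stepLe n b c → NF c → stepLe n (oadd b 1 0) (oadd c 1 0) := by
  have key : ∀ {b c : ONote}, stepLt n b c → NF c → stepLe n (oadd b 1 0) (oadd c 1 0) := by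
    intro b c h
    induction h with
    | single h =>
      intro hNF
      rw [h]
      exact omega_pow_step hNF hn
    | tail h1 h2 ih =>
      rename_i mid top
      intro hNF
      have hmid : NF mid := h2 ▸ fseq_NF hNF n
      exact (ih hmid).trans (h2 ▸ omega_pow_step hNF hn)
  intro b c h hNF
  rcases h with h | rfl
  · exact key h hNF
  · exact Or.inr rfl

private theorem succPNat_le_succPNat {x y : ℕ} (h : x ≤ y) :
    Nat.succPNat x ≤ Nat.succPNat y := by
  rw [← PNat.coe_le_coe]
  simpa using h

theorem fs_mono : ∀ (c : ONote), NF c → ∀ x y : ℕ, x ≤ y → stepLe y (fseq c x) (fseq c y) := by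
  intro c
  induction c with
  | zero => intro _ x y _; exact Or.inr rfl
  | oadd e m t ihe iht =>
    intro hNF x y hxy
    rcases eq_or_lt_of_le hxy with rfl | hlt
    · exact Or.inr rfl
    have hy1 : 1 ≤ y := by omega
    cases t with
    | oadd e' m' a' =>
      set t : ONote := oadd e' m' a' with htdef
      rw [fseq_oadd_oadd_s2, fseq_oadd_oadd_s2]
      exact stepLe_lift e m (iht hNF.snd x y hxy) (fseq_NF hNF.snd y)
    | zero =>
      rw [zero_def]
      cases e with
      | zero =>
        rw [zero_def, fseq_nat_s2, fseq_nat_s2]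
        exact Or.inr rfl
      | oadd e1 m1 a1 =>
        set e : ONote := oadd e1 m1 a1 with hedef
        have he0 : e ≠ 0 := oadd_ne_zero'
        have hNFe : NF e := hNF.fst
        obtain ⟨y', rfl⟩ : ∃ y', y = y' + 1 := ⟨y - 1, by omega⟩
        -- a generic "tail lifting" fact
        have tlift : ∀ A B : ONote, stepLe (y'+1) A B → NF B →
            stepLe (y'+1) (if m = 1 then A else oadd e (m-1) A)
              (if m = 1 then B else oadd e (m-1) B) := by
          intro A B h hB
          split
          · exact h
          · exact stepLe_lift e (m-1) h hB
        by_cases hs : isSucc e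
        · have hfe : ∀ j j' : ℕ, fseq e j = fseq e j' := fun j j' => isSucc_fseq_indep hs j j'
          set p : ONote := fseq e (y'+1) with hpdef
          have hpNF : NF p := fseq_NF hNFe _
          have hYnf : NF (oadd p (Nat.succPNat y') 0) := nf_oadd_zero hpNF _
          rw [fseq_succE m he0 hs y']
          cases x with
          | zero =>
            rw [fseq_succE_zero m he0 hs]
            refine tlift _ _ ?_ hYnf
            exact stepLe_of_stepLt (descend_zero _ _ hYnf oadd_ne_zero')
          | succ x' =>
            rw [fseq_succE m he0 hs x', hfe (x'+1) (y'+1), ← hpdef]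
            refine tlift _ _ ?_ hYnf
            exact coeff_descend hpNF hy1 _ _ (succPNat_le_succPNat (by omega))
        · rw [fseq_limitE m he0 hs x, fseq_limitE m he0 hs (y'+1)]
          have hYnf : NF (oadd (fseq e (y'+1)) 1 0) := nf_oadd_zero (fseq_NF hNFe _) _
          refine tlift _ _ ?_ hYnf
          exact omega_pow_lift hy1 (ihe hNFe x (y'+1) hxy) (fseq_NF hNFe _)

end ONote

namespace ONote
open Ordinal

theorem hardyRel_unique : ∀ {a : ONote} {x y y' : ℕ},
    HardyRel a x y → HardyRel a x y' → y = y' := by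
  intro a x y y' h
  induction h generalizing y' with
  | zero x =>
    intro h'
    cases h' with
    | zero => rfl
    | succ h _ => exact absurd h not_isSucc_zero_s2
    | limit h0 _ _ => exact absurd rfl h0
  | succ h hrec ih =>
    intro h'
    cases h' with
    | zero => exact absurd h not_isSucc_zero_s2
    | succ h2 hrec2 => exact ih hrec2
    | limit h0 h2 _ => exact absurd h h2
  | limit h0 h hrec ih =>
    intro h'
    cases h' with
    | zero => exact absurd rfl h0
    | succ h2 _ => exact absurd h2 h
    | limit h02 h2 hrec2 => exact ih hrec2

theorem hardyRel_exists : ∀ (a : ONote), NF a → ∀ x : ℕ, ∃ y, HardyRel a x y := by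
  suffices H : ∀ (o : Ordinal) (a : ONote), repr a = o → NF a → ∀ x, ∃ y, HardyRel a x y by
    intro a hNF x; exact H (repr a) a rfl hNF x
  intro o
  induction o using Ordinal.induction with
  | h o IH =>
    rintro a rfl hNF x
    by_cases h0 : a = 0
    · subst h0; exact ⟨x, HardyRel.zero x⟩
    by_cases hs : isSucc a
    · obtain ⟨y, hy⟩ := IH _ (repr_fseq_lt hNF h0 x) _ rfl (fseq_NF hNF x) (x+1)
      exact ⟨y, HardyRel.succ hs hy⟩
    · obtain ⟨y, hy⟩ := IH _ (repr_fseq_lt hNF h0 x) _ rfl (fseq_NF hNF x) x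
      exact ⟨y, HardyRel.limit h0 hs hy⟩

theorem hardy_eq {a : ONote} {x y : ℕ} (h : HardyRel a x y) : hardy a x = y := by
  rw [hardy, dif_pos ⟨y, h⟩]
  exact hardyRel_unique (Exists.choose_spec (⟨y, h⟩ : ∃ y, HardyRel a x y)) h

theorem hardy_zero (x : ℕ) : hardy 0 x = x := hardy_eq (HardyRel.zero x)

theorem hardy_succ {a : ONote} (hNF : NF a) (hs : isSucc a) (x : ℕ) :
    hardy a x = hardy (fseq a x) (x+1) := by
  obtain ⟨y, hy⟩ := hardyRel_exists _ (fseq_NF hNF x) (x+1)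
  rw [hardy_eq hy, hardy_eq (HardyRel.succ hs hy)]

theorem hardy_limit {a : ONote} (hNF : NF a) (h0 : a ≠ 0) (hs : ¬ isSucc a) (x : ℕ) :
    hardy a x = hardy (fseq a x) x := by
  obtain ⟨y, hy⟩ := hardyRel_exists _ (fseq_NF hNF x) x
  rw [hardy_eq hy, hardy_eq (HardyRel.limit h0 hs hy)]

theorem hardy_mono : ∀ (o : Ordinal) (a : ONote), repr a = o → NF a →
    ∀ x y : ℕ, x ≤ y → hardy a x ≤ hardy a y := by
  intro o
  induction o using Ordinal.induction with
  | h o IH =>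
    -- single-step descent does not increase Hardy values
    have step1 : ∀ t : ONote, NF t → repr t < o → ∀ n : ℕ,
        hardy (fseq t n) n ≤ hardy t n := by
      intro t hNF hlt n
      by_cases h0 : t = 0
      · subst h0; rw [fseq_zero']
      by_cases hs : isSucc t
      · rw [hardy_succ hNF hs]
        exact IH _ ((repr_fseq_lt hNF h0 n).trans hlt) _ rfl (fseq_NF hNF n) n (n+1)
          (Nat.le_succ n)
      · rw [hardy_limit hNF h0 hs]
    have stepB : ∀ {b t : ONote} (n : ℕ), stepLt n b t → NF t → repr t < o →
        hardy b n ≤ hardy t n := by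
      intro b t n h
      induction h with
      | single h =>
        intro hNF hlt
        exact h ▸ step1 _ hNF hlt n
      | tail h1 h2 ih =>
        rename_i mid top
        intro hNF hlt
        by_cases h0 : top = 0
        · subst h0
          rw [fseq_zero'] at h2
          subst h2
          rw [stepLt_zero h1]
        · have hmidlt : repr mid < o := h2 ▸ (repr_fseq_lt hNF h0 n).trans hlt
          have hmidnf : NF mid := h2 ▸ fseq_NF hNF n
          exact (ih hmidnf hmidlt).trans (h2 ▸ step1 _ hNF hlt n)
    rintro a rfl hNF x y hxy
    by_cases h0 : a = 0
    · subst h0; rw [hardy_zero, hardy_zero]; exact hxy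
    by_cases hs : isSucc a
    · rw [hardy_succ hNF hs x, hardy_succ hNF hs y, isSucc_fseq_indep hs x y]
      exact IH _ (repr_fseq_lt hNF h0 y) _ rfl (fseq_NF hNF y) (x+1) (y+1) (by omega)
    · rw [hardy_limit hNF h0 hs x, hardy_limit hNF h0 hs y]
      have h1 : hardy (fseq a x) x ≤ hardy (fseq a x) y :=
        IH _ (repr_fseq_lt hNF h0 x) _ rfl (fseq_NF hNF x) x y hxy
      refine h1.trans ?_
      rcases fs_mono a hNF x y hxy with h | h
      · exact stepB y h (fseq_NF hNF y) (repr_fseq_lt hNF h0 y)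
      · rw [h]

end ONote

/-- each Hardy function `H_α` (`α < ε₀`) is weakly monotone. -/
theorem hardy_monotone (a : ONote) (hNF : a.NF) :
    ∀ x y : ℕ, x ≤ y → hardy a x ≤ hardy a y :=
  fun x y h => ONote.hardy_mono (ONote.repr a) a rfl hNF x y h
end

section
/- The infinite Ramsey theorem implies the Diagonal Homogeneous principle DH: for all positive integers n, m, c there exists K > 1+n such that K →_Δ (m)^{1+n}_c, i.e., for every partition P : [K]^{1+n} → c of the (1+n)-element subsets of {0,...,K−1} into c colors, there is a set H ⊆ {0,...,K−1} with |H| = m that is diagonal homogeneous for P. -/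
/-- `H` is *diagonal homogeneous* for a partition `P` of `(1+n)`-element sets:
for `x₀ ∈ H`, `a < x₀`, and `n`-element subsets `Y, Z ⊆ H` lying entirely above
`x₀`, the colors of `{a} ∪ Y` and `{a} ∪ Z` agree. -/
def DiagHom (n : ℕ) {c : ℕ} (P : Finset ℕ → Fin c) (H : Finset ℕ) : Prop :=
  ∀ x₀ ∈ H, ∀ a < x₀, ∀ Y Z : Finset ℕ, Y ⊆ H → Z ⊆ H →
    Y.card = n → Z.card = n → (∀ y ∈ Y, x₀ < y) → (∀ z ∈ Z, x₀ < z) →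
    P (insert a Y) = P (insert a Z)

/-- `K →_Δ (m)^{1+n}_c` : every `c`-coloring of the `(1+n)`-element subsets of
`{0,…,K−1}` admits a diagonal homogeneous set of size `m`. -/
def ArrowDiag (K m n c : ℕ) : Prop :=
  ∀ P : Finset ℕ → Fin c, ∃ H : Finset ℕ,
    H ⊆ Finset.range K ∧ H.card = m ∧ DiagHom n P H

lemma infPigeon {κ : Type} [Finite κ] (f : ℕ → κ) (S : Set ℕ) (hS : S.Infinite) :
    ∃ v, {x | x ∈ S ∧ f x = v}.Infinite := by
  by_contra hcon
  push_neg at hcon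
  exact hS ((Set.finite_iUnion hcon).subset fun x hx => Set.mem_iUnion.2 ⟨f x, hx, rfl⟩)

lemma exists_seq (Q : ℕ → Set ℕ → Prop) (S₀ : Set ℕ) (hS₀ : S₀.Infinite)
    (hmono : ∀ a S S', S' ⊆ S → Q a S → Q a S')
    (h : ∀ S : Set ℕ, S.Infinite → ∃ x ∈ S, ∃ S', S' ⊆ S ∧ S'.Infinite ∧
      (∀ y ∈ S', x < y) ∧ Q x S') :
    ∃ x : ℕ → ℕ, StrictMono x ∧ (∀ i, x i ∈ S₀) ∧
      ∀ i, Q (x i) {y | ∃ j, i < j ∧ y = x j} := by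
  classical
  choose xf hxf Sf hsub hinf habove hQ using h
  let T : ℕ → {S : Set ℕ // S.Infinite} := fun i =>
    Nat.rec ⟨S₀, hS₀⟩ (fun _ p => ⟨Sf p.1 p.2, hinf p.1 p.2⟩) i
  let x : ℕ → ℕ := fun i => xf (T i).1 (T i).2
  have hTsucc : ∀ i, (T (i+1)).1 = Sf (T i).1 (T i).2 := fun i => rfl
  have hxT : ∀ i, x i ∈ (T i).1 := fun i => hxf _ _
  have hss : ∀ i, (T (i+1)).1 ⊆ (T i).1 := fun i => hsub _ _
  have hab : ∀ i y, y ∈ (T (i+1)).1 → x i < y := fun i => habove _ _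
  have hQ' : ∀ i, Q (x i) (T (i+1)).1 := fun i => hQ _ _
  have le_sub : ∀ i j, i ≤ j → (T j).1 ⊆ (T i).1 := by
    intro i j hij
    induction j, hij using Nat.le_induction with
    | base => exact subset_rfl
    | succ j hij ih => exact (hss j).trans ih
  have hsm : StrictMono x := strictMono_nat_of_lt_succ fun i => hab i _ (hxT (i+1))
  refine ⟨x, hsm, fun i => le_sub 0 i (Nat.zero_le i) (hxT i), fun i => ?_⟩
  refine hmono _ _ _ ?_ (hQ' i)
  rintro y ⟨j, hij, rfl⟩
  exact le_sub (i+1) j hij (hxT j)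

lemma infRamsey (n : ℕ) : ∀ {κ : Type} [Finite κ] (f : Finset ℕ → κ) (S : Set ℕ), S.Infinite →
    ∃ T, T ⊆ S ∧ T.Infinite ∧ ∃ v, ∀ Y : Finset ℕ, ↑Y ⊆ T → Y.card = n → f Y = v := by
  induction n with
  | zero =>
    intro κ _ f S hS
    exact ⟨S, subset_rfl, hS, f ∅, fun Y _ hY => by
      rw [Finset.card_eq_zero.1 hY]⟩
  | succ n ih =>
    intro κ _ f S hS
    obtain ⟨x, hsm, hmem, hQ⟩ := exists_seq
      (fun a S' => ∀ Y Z : Finset ℕ, ↑Y ⊆ S' → ↑Z ⊆ S' → Y.card = n → Z.card = n →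
        f (insert a Y) = f (insert a Z)) S hS
      (fun a S1 S2 hss hq Y Z hY hZ => hq Y Z (hY.trans hss) (hZ.trans hss))
      (by
        intro S' hS'
        obtain ⟨a, ha⟩ := hS'.nonempty
        have h2 : (S' ∩ Set.Ioi a).Infinite := by
          have h3 := hS'.diff (Set.finite_Iic a)
          rwa [Set.diff_eq, Set.compl_Iic] at h3
        obtain ⟨T, hTs, hTinf, v, hv⟩ := ih (fun Y => f (insert a Y)) _ h2
        exact ⟨a, ha, T, hTs.trans Set.inter_subset_left, hTinf,
          fun y hy => (hTs hy).2, fun Y Z hY hZ hYc hZc => (hv Y hY hYc).trans (hv Z hZ hZc).symm⟩)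
    set W : ℕ → Finset ℕ := fun i => Finset.image x (Finset.Ioc i (i+n)) with hWdef
    have hWcard : ∀ i, (W i).card = n := fun i => by
      rw [Finset.card_image_of_injective _ hsm.injective, Nat.card_Ioc]; omega
    have hWsub : ∀ i, (↑(W i) : Set ℕ) ⊆ {y | ∃ j, i < j ∧ y = x j} := by
      intro i y hy
      simp only [hWdef, Finset.coe_image, Set.mem_image, Finset.mem_coe, Finset.mem_Ioc] at hy
      obtain ⟨j, hj, rfl⟩ := hy
      exact ⟨j, hj.1, rfl⟩
    obtain ⟨v, hI⟩ := infPigeon (fun i => f (insert (x i) (W i))) Set.univ Set.infinite_univ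
    refine ⟨x '' {i | i ∈ Set.univ ∧ f (insert (x i) (W i)) = v}, ?_,
      hI.image (Set.injOn_of_injective hsm.injective), v, ?_⟩
    · rintro _ ⟨i, _, rfl⟩; exact hmem i
    · intro Y hYT hYc
      have hne : Y.Nonempty := Finset.card_pos.1 (by omega)
      obtain ⟨i, hiI, hib⟩ : ∃ i, (i ∈ Set.univ ∧ f (insert (x i) (W i)) = v) ∧ Y.min' hne = x i := by
        obtain ⟨i, hi, h⟩ := hYT (Finset.mem_coe.2 (Y.min'_mem hne))
        exact ⟨i, hi, h.symm⟩
      have herase : (↑(Y.erase (Y.min' hne)) : Set ℕ) ⊆ {y | ∃ j, i < j ∧ y = x j} := by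
        intro y hy
        have hyY : y ∈ Y := Finset.mem_of_mem_erase (Finset.mem_coe.1 hy)
        have hyne : y ≠ Y.min' hne := Finset.ne_of_mem_erase (Finset.mem_coe.1 hy)
        obtain ⟨j, _, rfl⟩ := hYT (Finset.mem_coe.2 hyY)
        have hlt : x i < x j := by
          rw [← hib]
          exact lt_of_le_of_ne (Y.min'_le _ hyY) (Ne.symm hyne)
        exact ⟨j, hsm.lt_iff_lt.1 hlt, rfl⟩
      have h1 := hQ i (Y.erase (Y.min' hne)) (W i) herase (hWsub i)
        (by rw [Finset.card_erase_of_mem (Y.min'_mem hne), hYc]; omega) (hWcard i)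
      have h0 : f Y = f (insert (x i) (Y.erase (Y.min' hne))) := by
        rw [← hib, Finset.insert_erase (Y.min'_mem hne)]
      rw [h0, h1]
      exact hiI.2

lemma infDiag (n c : ℕ) (P : Finset ℕ → Fin c) :
    ∃ x : ℕ → ℕ, StrictMono x ∧ ∀ i, ∀ a, a < x i → ∀ Y Z : Finset ℕ,
      (↑Y : Set ℕ) ⊆ {y | ∃ j, i < j ∧ y = x j} → (↑Z : Set ℕ) ⊆ {y | ∃ j, i < j ∧ y = x j} →
      Y.card = n → Z.card = n → P (insert a Y) = P (insert a Z) := by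
  obtain ⟨x, hsm, _, hQ⟩ := exists_seq
    (fun b S' => ∀ a, a < b → ∀ Y Z : Finset ℕ, ↑Y ⊆ S' → ↑Z ⊆ S' → Y.card = n → Z.card = n →
      P (insert a Y) = P (insert a Z)) Set.univ Set.infinite_univ
    (fun b S1 S2 hss hq a ha Y Z hY hZ => hq a ha Y Z (hY.trans hss) (hZ.trans hss))
    (by
      intro S hS
      obtain ⟨b, hb⟩ := hS.nonempty
      have h2 : (S ∩ Set.Ioi b).Infinite := by
        have h3 := hS.diff (Set.finite_Iic b)
        rwa [Set.diff_eq, Set.compl_Iic] at h3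
      obtain ⟨T, hTs, hTinf, v, hv⟩ := infRamsey n (κ := Fin b → Fin c)
        (fun Y a => P (insert a.1 Y)) _ h2
      refine ⟨b, hb, T, hTs.trans Set.inter_subset_left, hTinf, fun y hy => (hTs hy).2, ?_⟩
      intro a ha Y Z hY hZ hYc hZc
      have e1 := congrFun (hv Y hY hYc) ⟨a, ha⟩
      have e2 := congrFun (hv Z hZ hZc) ⟨a, ha⟩
      exact e1.trans e2.symm)
  exact ⟨x, hsm, hQ⟩

lemma exists_DH (n m c : ℕ) (P : Finset ℕ → Fin c) :
    ∃ H : Finset ℕ, H.card = m ∧ DiagHom n P H := by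
  obtain ⟨x, hsm, hd⟩ := infDiag n c P
  refine ⟨Finset.image x (Finset.range m), by
    rw [Finset.card_image_of_injective _ hsm.injective, Finset.card_range], ?_⟩
  intro x₀ hx₀ a ha Y Z hY hZ hYc hZc hYgt hZgt
  obtain ⟨i, _, rfl⟩ := Finset.mem_image.1 hx₀
  refine hd i a ha Y Z ?_ ?_ hYc hZc
  · intro y hy
    have hyY : y ∈ Y := Finset.mem_coe.1 hy
    obtain ⟨j, _, rfl⟩ := Finset.mem_image.1 (hY hyY)
    exact ⟨j, hsm.lt_iff_lt.1 (hYgt _ hyY), rfl⟩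
  · intro z hz
    have hzZ : z ∈ Z := Finset.mem_coe.1 hz
    obtain ⟨j, _, rfl⟩ := Finset.mem_image.1 (hZ hzZ)
    exact ⟨j, hsm.lt_iff_lt.1 (hZgt _ hzZ), rfl⟩

lemma ultra_exists {c : ℕ} (U : Ultrafilter ℕ) (g : ℕ → Fin c) :
    ∃ v, {j | g j = v} ∈ U := by
  by_contra hcon
  push_neg at hcon
  have h1 : ∀ v : Fin c, {j | g j = v}ᶜ ∈ U := fun v =>
    Ultrafilter.compl_mem_iff_notMem.2 (hcon v)
  have h2 : (⋂ v : Fin c, {j | g j = v}ᶜ) ∈ U := by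
    rw [← Ultrafilter.mem_coe, Filter.iInter_mem]
    exact fun v => Ultrafilter.mem_coe.2 (h1 v)
  have h3 : (⋂ v : Fin c, {j | g j = v}ᶜ) = ∅ := by
    ext j
    simp only [Set.mem_iInter, Set.mem_compl_iff, Set.mem_setOf_eq, Set.mem_empty_iff_false,
      iff_false, not_forall, not_not]
    exact ⟨g j, rfl⟩
  rw [h3] at h2
  exact Filter.empty_notMem (↑U : Filter ℕ) (Ultrafilter.mem_coe.2 h2)


/-- the Diagonal Homogeneous principle DH, a consequence of the
infinite Ramsey theorem: for all positive `n, m, c` there is `K > 1 + n` with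
`K →_Δ (m)^{1+n}_c`. -/
theorem diagonal_homogeneous_principle :
    ∀ n m c : ℕ, 0 < n → 0 < m → 0 < c →
      ∃ K : ℕ, 1 + n < K ∧ ArrowDiag K m n c := by
  intro n m c hn hm hc
  by_contra hcon
  push_neg at hcon
  have hbad : ∀ j : ℕ, ∃ P : Finset ℕ → Fin c, ∀ H : Finset ℕ,
      ¬(H ⊆ Finset.range (j + n + 2) ∧ H.card = m ∧ DiagHom n P H) := by
    intro j
    have h1 := hcon (j + n + 2) (by omega)
    rw [ArrowDiag] at h1
    push_neg at h1
    obtain ⟨P, hP⟩ := h1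
    refine ⟨P, fun H h => ?_⟩
    exact (hP H h.1 h.2.1) h.2.2
  choose Q hQ using hbad
  set U := Filter.hyperfilter ℕ with hU
  have hval : ∀ s : Finset ℕ, ∃ v, {j | Q j s = v} ∈ U := fun s =>
    ultra_exists U (fun j => Q j s)
  choose P hP using hval
  obtain ⟨H, hHcard, hHdh⟩ := exists_DH n m c P
  set K := H.sup id + n + 2 with hK
  have hHK : H ⊆ Finset.range K := fun y hy => Finset.mem_range.2 (by
    have := Finset.le_sup (f := id) hy
    simp only [id] at this
    omega)
  have hJ : (⋂ s ∈ ((Finset.range K).powerset : Finset (Finset ℕ)),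
      {j | Q j s = P s}) ∈ (↑U : Filter ℕ) := by
    rw [Filter.biInter_finset_mem]
    intro s _
    exact Ultrafilter.mem_coe.2 (hP s)
  have hJinf : (⋂ s ∈ ((Finset.range K).powerset : Finset (Finset ℕ)),
      {j | Q j s = P s}).Infinite := by
    by_contra hfin
    rw [Set.not_infinite] at hfin
    exact Set.Finite.notMem_hyperfilter hfin hJ
  obtain ⟨j, hjJ, hjK⟩ := hJinf.exists_gt K
  have hagree : ∀ s : Finset ℕ, s ⊆ Finset.range K → Q j s = P s := by
    intro s hs
    exact Set.mem_iInter₂.1 hjJ s (Finset.mem_coe.2 (Finset.mem_powerset.2 hs))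
  refine hQ j H ⟨?_, hHcard, ?_⟩
  · exact hHK.trans (Finset.range_subset_range.2 (by omega))
  · intro x₀ hx₀ a ha Y Z hY hZ hYc hZc hYgt hZgt
    have hx₀K : x₀ < K := Finset.mem_range.1 (hHK hx₀)
    have hsub1 : insert a Y ⊆ Finset.range K := by
      intro y hy
      rcases Finset.mem_insert.1 hy with rfl | hy
      · exact Finset.mem_range.2 (ha.trans hx₀K)
      · exact hHK (hY hy)
    have hsub2 : insert a Z ⊆ Finset.range K := by
      intro y hy
      rcases Finset.mem_insert.1 hy with rfl | hy
      · exact Finset.mem_range.2 (ha.trans hx₀K)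
      · exact hHK (hZ hy)
    rw [hagree _ hsub1, hagree _ hsub2]
    exact hHdh x₀ hx₀ a ha Y Z hY hZ hYc hZc hYgt hZgt
end

section
/- For every infinite set X ⊆ ℕ, every n ≥ 1, every c ≥ 1, and every coloring P : [ℕ]^{1+n} → c, there exists an infinite subset H ⊆ X that is diagonal homogeneous for P: for all x₀ ∈ H, all a < x₀, and all n-element subsets Y, Z of H whose minimum exceeds x₀, P({a} ∪ Y) = P({a} ∪ Z). -/
/-- Infinite Ramsey theorem on ℕ with an arbitrary finite set of colors. -/
theorem ramseyN : ∀ (n : ℕ) {κ : Type} [Fintype κ] (f : Finset ℕ → κ) (S : Set ℕ),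
    S.Infinite → ∃ H : Set ℕ, H ⊆ S ∧ H.Infinite ∧ ∃ k : κ,
      ∀ Y : Finset ℕ, ↑Y ⊆ H → Y.card = n → f Y = k := by
  intro n
  induction n with
  | zero =>
    intro κ _ f S hS
    refine ⟨S, subset_rfl, hS, f ∅, fun Y _ hY => ?_⟩
    rw [Finset.card_eq_zero] at hY; rw [hY]
  | succ n ih =>
    intro κ _ f S hS
    have hstep : ∀ T : {T : Set ℕ // T.Infinite},
        ∃ T' : {T : Set ℕ // T.Infinite}, ∃ k : κ,
          T'.1 ⊆ T.1 \ Set.Iic (sInf T.1) ∧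
          ∀ Y : Finset ℕ, ↑Y ⊆ T'.1 → Y.card = n → f (insert (sInf T.1) Y) = k := by
      rintro ⟨T, hT⟩
      have hT' : (T \ Set.Iic (sInf T)).Infinite := hT.diff (Set.finite_Iic _)
      obtain ⟨H, hHsub, hHinf, k, hk⟩ := ih (fun Y => f (insert (sInf T) Y)) _ hT'
      exact ⟨⟨H, hHinf⟩, k, hHsub, hk⟩
    choose step col hsub hcol using hstep
    let F : ℕ → {T : Set ℕ // T.Infinite} := fun i => Nat.rec ⟨S, hS⟩ (fun _ T => step T) i
    have hF : ∀ i, F (i + 1) = step (F i) := fun i => rfl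
    set x : ℕ → ℕ := fun i => sInf (F i).1 with hxdef
    have hxmem : ∀ i, x i ∈ (F i).1 := fun i => Nat.sInf_mem (F i).2.nonempty
    have hmono1 : ∀ i, (F (i + 1)).1 ⊆ (F i).1 := by
      intro i t ht
      rw [hF i] at ht
      exact (hsub (F i) ht).1
    have hmono : ∀ i j, i ≤ j → (F j).1 ⊆ (F i).1 := by
      intro i j h
      induction h with
      | refl => exact subset_rfl
      | step h ih2 => exact (hmono1 _).trans ih2
    have hxlt : ∀ i, x i < x (i + 1) := by
      intro i
      have := hxmem (i + 1)
      rw [hF i] at this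
      have := hsub (F i) this
      simpa [hxdef] using this.2
    have hxsm : StrictMono x := strictMono_nat_of_lt_succ hxlt
    -- pigeonhole on colors
    obtain ⟨k, hk⟩ := Finite.exists_infinite_fiber (fun i => col (F i))
    have hI : (Set.preimage (fun i => col (F i)) {k}).Infinite := by
      rw [Set.infinite_coe_iff] at hk; exact hk
    refine ⟨x '' (Set.preimage (fun i => col (F i)) {k}), ?_, ?_, k, ?_⟩
    · rintro _ ⟨i, _, rfl⟩
      exact hmono 0 i (Nat.zero_le i) (hxmem i)
    · exact hI.image (Set.injOn_of_injective hxsm.injective)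
    · intro Y hY hYcard
      have hYne : Y.Nonempty := by
        rw [← Finset.card_pos, hYcard]; omega
      set m := Y.min' hYne with hm
      have hmY : m ∈ Y := Y.min'_mem hYne
      obtain ⟨i, hiI, hix⟩ := hY hmY
      have hsubY' : ↑(Y.erase m) ⊆ (step (F i)).1 := by
        intro y hy
        have hy' : y ∈ Y.erase m := hy
        have hyY := Finset.mem_of_mem_erase hy'
        have hyne := Finset.ne_of_mem_erase hy'
        obtain ⟨j, _, hjx⟩ := hY hyY
        have hmy : m < y := lt_of_le_of_ne (Y.min'_le y hyY) (Ne.symm hyne)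
        have hij : i < j := by
          rw [← hxsm.lt_iff_lt]; rw [hix, hjx]; exact hmy
        have : (F j).1 ⊆ (F (i + 1)).1 := hmono (i + 1) j hij
        rw [hF i] at this
        exact this (hjx ▸ hxmem j)
      have hcard' : (Y.erase m).card = n := by
        rw [Finset.card_erase_of_mem hmY, hYcard]
        omega
      have := hcol (F i) (Y.erase m) hsubY' hcard'
      have hx' : sInf ((F i).1 : Set ℕ) = m := hix
      rw [hx', Finset.insert_erase hmY] at this
      rw [this]
      simpa using hiI

/-- infinitary diagonal homogeneity: for every infinite `X ⊆ ℕ`,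
`n, c ≥ 1` and coloring `P` of `(1+n)`-element sets by `c` colors, there is an
infinite `H ⊆ X` that is diagonal homogeneous for `P`. -/
theorem infinite_diagonal_homogeneous (X : Set ℕ) (hX : X.Infinite)
    (n c : ℕ) (hn : 1 ≤ n) (hc : 1 ≤ c) (P : Finset ℕ → Fin c) :
    ∃ H : Set ℕ, H ⊆ X ∧ H.Infinite ∧
      ∀ x₀ ∈ H, ∀ a < x₀, ∀ Y Z : Finset ℕ, ↑Y ⊆ H → ↑Z ⊆ H →
        Y.card = n → Z.card = n → (∀ y ∈ Y, x₀ < y) → (∀ z ∈ Z, x₀ < z) →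
        P (insert a Y) = P (insert a Z) := by
  have hstep : ∀ T : {T : Set ℕ // T.Infinite},
      ∃ T' : {T : Set ℕ // T.Infinite},
        T'.1 ⊆ T.1 \ Set.Iic (sInf T.1) ∧
        ∀ a < sInf T.1, ∀ Y Z : Finset ℕ, ↑Y ⊆ T'.1 → ↑Z ⊆ T'.1 →
          Y.card = n → Z.card = n → P (insert a Y) = P (insert a Z) := by
    rintro ⟨T, hT⟩
    have hT' : (T \ Set.Iic (sInf T)).Infinite := hT.diff (Set.finite_Iic _)
    obtain ⟨H, hHsub, hHinf, k, hk⟩ :=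
      ramseyN n (κ := Fin (sInf T) → Fin c)
        (fun Y => fun a => P (insert (a : ℕ) Y)) _ hT'
    refine ⟨⟨H, hHinf⟩, hHsub, ?_⟩
    intro a ha Y Z hY hZ hYc hZc
    have h1 := hk Y hY hYc
    have h2 := hk Z hZ hZc
    have e1 := congrFun h1 ⟨a, ha⟩
    have e2 := congrFun h2 ⟨a, ha⟩
    simp only at e1 e2
    rw [e1, e2]
  choose step hsub hcol using hstep
  let F : ℕ → {T : Set ℕ // T.Infinite} := fun i => Nat.rec ⟨X, hX⟩ (fun _ T => step T) i
  have hF : ∀ i, F (i + 1) = step (F i) := fun i => rfl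
  set x : ℕ → ℕ := fun i => sInf (F i).1 with hxdef
  have hxmem : ∀ i, x i ∈ (F i).1 := fun i => Nat.sInf_mem (F i).2.nonempty
  have hmono1 : ∀ i, (F (i + 1)).1 ⊆ (F i).1 := by
    intro i t ht
    rw [hF i] at ht
    exact (hsub (F i) ht).1
  have hmono : ∀ i j, i ≤ j → (F j).1 ⊆ (F i).1 := by
    intro i j h
    induction h with
    | refl => exact subset_rfl
    | step h ih2 => exact (hmono1 _).trans ih2
  have hxlt : ∀ i, x i < x (i + 1) := by
    intro i
    have := hxmem (i + 1)
    rw [hF i] at this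
    have := hsub (F i) this
    simpa [hxdef] using this.2
  have hxsm : StrictMono x := strictMono_nat_of_lt_succ hxlt
  refine ⟨Set.range x, ?_, ?_, ?_⟩
  · rintro _ ⟨i, rfl⟩
    exact hmono 0 i (Nat.zero_le i) (hxmem i)
  · exact Set.infinite_range_of_injective hxsm.injective
  · rintro x₀ ⟨i, rfl⟩ a ha Y Z hY hZ hYc hZc hYgt hZgt
    have hsub' : ∀ (W : Finset ℕ), ↑W ⊆ Set.range x → (∀ w ∈ W, x i < w) →
        ↑W ⊆ (step (F i)).1 := by
      intro W hW hWgt w hw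
      obtain ⟨j, hjx⟩ := hW hw
      have hij : i < j := by
        rw [← hxsm.lt_iff_lt, hjx]; exact hWgt w hw
      have h2 : (F j).1 ⊆ (F (i + 1)).1 := hmono (i + 1) j hij
      rw [hF i] at h2
      exact h2 (hjx ▸ hxmem j)
    exact hcol (F i) a ha Y Z (hsub' Y hY hYgt) (hsub' Z hZ hZgt) hYc hZc
end

section
/- Bounding lemma: if Γ is a finite set of Σ₁-sentences and (γ, k) ⊢^α_0 Γ, then H_γ(k) ⊨ Γ, i.e., there exists a sentence ∃x A(x) in Γ (A ∈ Δ₀) such that ℕ ⊨ ∃x < H_γ(k) A(x). -/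
/-- Infinitary sentences of arithmetic: `Δ₀`-sentences are identified with their
truth value, and quantifiers range over numerals. -/
inductive Fml : Type 1 where
  | delta0 (P : Prop) : Fml
  | or (A B : Fml) : Fml
  | and (A B : Fml) : Fml
  | ex (A : ℕ → Fml) : Fml
  | all (A : ℕ → Fml) : Fml

/-- Negation (de Morgan dual). -/
def Fml.neg : Fml → Fml
  | .delta0 P => .delta0 (¬ P)
  | .or A B => .and A.neg B.neg
  | .and A B => .or A.neg B.neg
  | .ex A => .all fun n => (A n).neg
  | .all A => .ex fun n => (A n).neg

/-- `dg(A)`: `dg = 0` on `Δ₀`, `max` at `∨,∧`, `+1` at quantifiers. -/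
def Fml.dg : Fml → ℕ
  | .delta0 _ => 0
  | .or A B => max A.dg B.dg
  | .and A B => max A.dg B.dg
  | .ex A => (A 0).dg + 1
  | .all A => (A 0).dg + 1

/-- `A` is a `Σ₁`-sentence `∃x A₀(x)` with `A₀ ∈ Δ₀`. -/
def Fml.IsSigma1 (A : Fml) : Prop :=
  ∃ f : ℕ → Fml, A = Fml.ex f ∧ ∀ n, ∃ P : Prop, f n = Fml.delta0 P

/-- Truth of a `Δ₀`-sentence. -/
def Fml.TrueD0 (A : Fml) : Prop := ∃ P : Prop, A = Fml.delta0 P ∧ P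

/-- `k ⊨ ∃x A(x)` : there is a witness `n < k` making the `Δ₀`-matrix true. -/
def Fml.SatBelow (k : ℕ) (A : Fml) : Prop :=
  ∃ f : ℕ → Fml, A = Fml.ex f ∧ ∃ n < k, (f n).TrueD0

/-- The witness-bounding derivability relation `(γ, k) ⊢^α_c Γ`, with
`ℓ = H_γ(k)` controlling ordinal descent and existential witnesses. -/
inductive Der : ONote → ℕ → ONote → ℕ → Set Fml → Prop
  | ax {γ : ONote} {k : ℕ} {α : ONote} {c : ℕ} {Γ : Set Fml} (P : Prop) (hP : P)
      (hmem : Fml.delta0 P ∈ Γ) : Der γ k α c Γ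
  | cut {γ : ONote} {k : ℕ} {α α₀ : ONote} {c : ℕ} {Γ : Set Fml} (A : Fml)
      (hord : ONote.stepLe (hardy γ k) (α₀ + 1) α) (hdg : A.dg < c)
      (d₁ : Der γ k α₀ c (insert A Γ)) (d₂ : Der γ k α₀ c (insert A.neg Γ)) :
      Der γ k α c Γ
  | and {γ : ONote} {k : ℕ} {α α₀ : ONote} {c : ℕ} {Γ : Set Fml} (A₀ A₁ : Fml)
      (hord : ONote.stepLt (hardy γ k) α₀ α) (hmem : Fml.and A₀ A₁ ∈ Γ)
      (d₀ : Der γ k α₀ c (insert A₀ Γ)) (d₁ : Der γ k α₀ c (insert A₁ Γ)) :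
      Der γ k α c Γ
  | or {γ : ONote} {k : ℕ} {α α₀ : ONote} {c : ℕ} {Γ : Set Fml} (A₀ A₁ : Fml) (i : Bool)
      (hord : ONote.stepLe (hardy γ k) (α₀ + 1) α) (hmem : Fml.or A₀ A₁ ∈ Γ)
      (d : Der γ k α₀ c (insert (cond i A₀ A₁) Γ)) : Der γ k α c Γ
  | allOmega {γ : ONote} {k : ℕ} {α α₀ : ONote} {c : ℕ} {Γ : Set Fml} (A : ℕ → Fml)
      (hord : ONote.stepLt (hardy γ k) α₀ α) (hmem : Fml.all A ∈ Γ)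
      (d : ∀ n : ℕ, Der γ (max k n) α₀ c (insert (A n) Γ)) : Der γ k α c Γ
  | exIntro {γ : ONote} {k : ℕ} {α α₀ : ONote} {c : ℕ} {Γ : Set Fml} (A : ℕ → Fml) (n : ℕ)
      (hord : ONote.stepLe (hardy γ k) (α₀ + 1) α) (hmem : Fml.ex A ∈ Γ)
      (hn : n < hardy γ k) (d : Der γ k α₀ c (insert (A n) Γ)) : Der γ k α c Γ

lemma Der.bounding_aux {γ0 : ONote} {k0 : ℕ} {α0 : ONote} {c0 : ℕ} {Γ0 : Set Fml}
    (d : Der γ0 k0 α0 c0 Γ0) :  c0 = 0 →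
    (∀ A ∈ Γ0, A.IsSigma1 ∨ ∃ P : Prop, A = Fml.delta0 P) →
    ∃ A ∈ Γ0, Fml.SatBelow (hardy γ0 k0) A ∨ A.TrueD0 := by
  induction d with
  | ax P hP hmem =>
    intro hc hSig
    exact ⟨Fml.delta0 P, hmem, Or.inr ⟨P, rfl, hP⟩⟩
  | cut A hord hdg d₁ d₂ ih₁ ih₂ =>
    intro hc hSig
    omega
  | and A₀ A₁ hord hmem d₀ d₁ ih₀ ih₁ =>
    intro hc hSig
    rcases hSig _ hmem with ⟨f, hf, -⟩ | ⟨P, hP⟩ <;> exact Fml.noConfusion (by assumption)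
  | or A₀ A₁ i hord hmem d ih =>
    intro hc hSig
    rcases hSig _ hmem with ⟨f, hf, -⟩ | ⟨P, hP⟩ <;> exact Fml.noConfusion (by assumption)
  | allOmega A hord hmem d ih =>
    intro hc hSig
    rcases hSig _ hmem with ⟨f, hf, -⟩ | ⟨P, hP⟩ <;> exact Fml.noConfusion (by assumption)
  | exIntro A n hord hmem hn d ih =>
    intro hc hSig
    rename_i Γ
    rcases hSig _ hmem with ⟨f, hf, hfd⟩ | ⟨P, hP⟩
    · have hAf : A = f := Fml.ex.inj hf
      obtain ⟨P, hPn⟩ := hfd n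
      have hins : ∀ B ∈ insert (A n) Γ, B.IsSigma1 ∨ ∃ Q : Prop, B = Fml.delta0 Q := by
        intro B hB
        rcases hB with hB | hB
        · exact Or.inr ⟨P, by rw [hB, hAf, hPn]⟩
        · exact hSig _ hB
      obtain ⟨B, hB, hsat⟩ := ih hc hins
      rcases hB with hB | hB
      · rcases hsat with hsat | htrue
        · obtain ⟨g, hg, -⟩ := hsat
          rw [hB, hAf, hPn] at hg
          exact Fml.noConfusion hg
        · exact ⟨Fml.ex A, hmem, Or.inl ⟨A, rfl, n, hn, hB ▸ htrue⟩⟩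
      · exact ⟨B, hB, hsat⟩
    · exact Fml.noConfusion hP

/-- Bounding: if `Γ` is a finite set of `Σ₁`-sentences and
`(γ,k) ⊢^α_0 Γ`, then `H_γ(k) ⊨ Γ`, i.e. some `∃x A(x) ∈ Γ` has a true
instance with witness below `H_γ(k)`. -/
theorem Der.bounding (γ α : ONote) (k : ℕ) (Γ : Set Fml)
    (hγ : γ.NF) (hα : α.NF) (hfin : Γ.Finite) (hSig : ∀ A ∈ Γ, A.IsSigma1)
    (d : Der γ k α 0 Γ) : ∃ A ∈ Γ, Fml.SatBelow (hardy γ k) A := by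
  obtain ⟨A, hA, hsat⟩ := d.bounding_aux rfl (fun A hA => Or.inl (hSig A hA))
  refine ⟨A, hA, ?_⟩
  rcases hsat with h | h
  · exact h
  · obtain ⟨f, hf, -⟩ := hSig A hA
    obtain ⟨P, hP, -⟩ := h
    rw [hf] at hP
    exact Fml.noConfusion hP
end

section
/- Elimination of false Δ₀ sentences: if ⊥ is a false Δ₀-sentence and (γ, k) ⊢^α_c Γ, ⊥, then (γ, k) ⊢^α_c Γ. -/
private theorem Der.false_elim_aux (P : Prop) (hP : ¬ P) :
    ∀ {γ : ONote} {k : ℕ} {α : ONote} {c : ℕ} {Δ : Set Fml}, Der γ k α c Δ →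
      ∀ Γ : Set Fml, Δ = insert (Fml.delta0 P) Γ → Der γ k α c Γ := by
  intro γ k α c Δ d
  induction d with
  | ax P' hP' hmem =>
    intro Γ hΔ
    subst hΔ
    rcases hmem with h | h
    · exact absurd (by injection h with h'; exact h' ▸ hP') hP
    · exact Der.ax P' hP' h
  | cut A hord hdg d₁ d₂ ih₁ ih₂ =>
    intro Γ hΔ
    subst hΔ
    exact Der.cut A hord hdg (ih₁ _ (Set.insert_comm _ _ _))
      (ih₂ _ (Set.insert_comm _ _ _))
  | and A₀ A₁ hord hmem d₀ d₁ ih₀ ih₁ =>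
    intro Γ hΔ
    subst hΔ
    rcases hmem with h | h
    · exact absurd h (by rintro ⟨⟩)
    · exact Der.and A₀ A₁ hord h (ih₀ _ (Set.insert_comm _ _ _))
        (ih₁ _ (Set.insert_comm _ _ _))
  | or A₀ A₁ i hord hmem d ih =>
    intro Γ hΔ
    subst hΔ
    rcases hmem with h | h
    · exact absurd h (by rintro ⟨⟩)
    · exact Der.or A₀ A₁ i hord h (ih _ (Set.insert_comm _ _ _))
  | allOmega A hord hmem d ih =>
    intro Γ hΔ
    subst hΔ
    rcases hmem with h | h
    · exact absurd h (by rintro ⟨⟩)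
    · exact Der.allOmega A hord h (fun n => ih n _ (Set.insert_comm _ _ _))
  | exIntro A n hord hmem hn d ih =>
    intro Γ hΔ
    subst hΔ
    rcases hmem with h | h
    · exact absurd h (by rintro ⟨⟩)
    · exact Der.exIntro A n hord h hn (ih _ (Set.insert_comm _ _ _))

/-- False: if `⊥` is a false `Δ₀`-sentence and
`(γ,k) ⊢^α_c Γ, ⊥`, then `(γ,k) ⊢^α_c Γ`. -/
theorem Der.false_elim (γ α : ONote) (k c : ℕ) (Γ : Set Fml) (P : Prop)
    (hγ : γ.NF) (hα : α.NF) (hP : ¬ P)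
    (d : Der γ k α c (insert (Fml.delta0 P) Γ)) : Der γ k α c Γ :=
  Der.false_elim_aux P hP d Γ rfl
end
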